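/- arXiv:2603.07842 — 7 statements merged into one kernel-verified Lean document; each statement's English description precedes it below -/
import Mathlib

section
/- Let X₁, X₂, ... be i.i.d. real random variables, and let s, t be positive integers with the sample mean of size s stochastically dominating the sample mean of size t (i.e., X̄_s ≥_st X̄_t). Then for every positive integer k, X̄_{ks} ≥_st X̄_{kt}, where X̄_m denotes the average of m i.i.d. copies of X. -/
open MeasureTheory ProbabilityTheory
open Set
open scoped ENNReal

noncomputable def cp (ν : Measure ℝ) : ℕ → Measure ℝ
  | 0 => Measure.dirac 0
  | n + 1 => (cp ν n).conv ν

@[simp] lemma cp_zero (ν : Measure ℝ) : cp ν 0 = Measure.dirac 0 := rfl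
@[simp] lemma cp_succ (ν : Measure ℝ) (n : ℕ) : cp ν (n+1) = (cp ν n).conv ν := rfl

instance cp_prob (ν : Measure ℝ) [IsProbabilityMeasure ν] : ∀ n, IsProbabilityMeasure (cp ν n)
  | 0 => by rw [cp_zero]; infer_instance
  | n + 1 => by rw [cp_succ]; have := cp_prob ν n; infer_instance

lemma myconv_assoc (α β γ : Measure ℝ) [SFinite α] [SFinite β] [SFinite γ] :
    (α.conv β).conv γ = α.conv (β.conv γ) := by
  have hadd : Measurable (fun p : ℝ × ℝ => p.1 + p.2) := measurable_add
  have h1 : ((α.prod β).map (fun p : ℝ × ℝ => p.1 + p.2)).prod γ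
      = ((α.prod β).prod γ).map (Prod.map (fun p : ℝ × ℝ => p.1 + p.2) id) := by
    conv_lhs => rw [← Measure.map_id (μ := γ)]
    rw [Measure.map_prod_map _ _ hadd measurable_id]
  have h2 : α.prod ((β.prod γ).map (fun p : ℝ × ℝ => p.1 + p.2))
      = (α.prod (β.prod γ)).map (Prod.map (id : ℝ → ℝ) (fun p : ℝ × ℝ => p.1 + p.2)) := by
    conv_lhs => rw [← Measure.map_id (μ := α)]
    rw [Measure.map_prod_map _ _ measurable_id hadd]
  show (((α.prod β).map _).prod γ).map _ = (α.prod ((β.prod γ).map _)).map _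
  rw [h1, h2, Measure.map_map hadd (hadd.prodMap measurable_id),
    Measure.map_map hadd (measurable_id.prodMap hadd),
    ← Measure.prodAssoc_prod, Measure.map_map ?m1 MeasurableEquiv.prodAssoc.measurable]
  · congr 1
    ext p
    simp [MeasurableEquiv.prodAssoc, Prod.map, add_assoc]
  case m1 => fun_prop

lemma conv_Iic (α β : Measure ℝ) [SFinite α] [SFinite β] (z : ℝ) :
    (α.conv β) (Iic z) = ∫⁻ u, β (Iic (z - u)) ∂α := by
  show ((α.prod β).map (fun p : ℝ × ℝ => p.1 + p.2)) (Iic z) = _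
  rw [Measure.map_apply measurable_add measurableSet_Iic,
    Measure.prod_apply (measurable_add measurableSet_Iic)]
  refine lintegral_congr fun u => ?_
  congr 1
  ext w
  simp only [mem_preimage, mem_setOf_eq, mem_Iic]
  constructor <;> intro h <;> linarith

lemma cp_add (ν : Measure ℝ) [IsProbabilityMeasure ν] : ∀ m n, cp ν (m + n) = (cp ν m).conv (cp ν n)
  | m, 0 => by simp
  | m, n + 1 => by
    rw [show m + (n+1) = (m+n)+1 from rfl, cp_succ, cp_add ν m n, cp_succ, myconv_assoc]

lemma lintegral_antitone_le (α β : Measure ℝ) [IsProbabilityMeasure α] [IsProbabilityMeasure β]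
    (r : ℝ) (hr : 0 < r)
    (hIic : ∀ c : ℝ, α (Iic c) ≤ β (Iic (r * c)))
    (g : ℝ → ℝ≥0∞) (hg : Antitone g) (hg1 : ∀ u, g u ≤ 1) :
    ∫⁻ u, g u ∂α ≤ ∫⁻ w, g (r⁻¹ * w) ∂β := by
  have hIio : ∀ c : ℝ, α (Iio c) ≤ β (Iio (r * c)) := by
    intro c
    have hU : Iio c = ⋃ n : ℕ, Iic (c - 1 / (n + 1)) := by
      ext u
      simp only [mem_Iio, mem_iUnion, mem_Iic]
      constructor
      · intro h
        obtain ⟨n, hn⟩ := exists_nat_one_div_lt (sub_pos.mpr h)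
        exact ⟨n, by push_cast at hn ⊢; linarith⟩
      · rintro ⟨n, hn⟩
        have : (0:ℝ) < 1 / (n + 1) := by positivity
        linarith
    have hmono : Monotone (fun n : ℕ => Iic (c - 1 / (n + 1 : ℝ))) := by
      intro m n hmn
      apply Iic_subset_Iic.mpr
      have h1 : (m + 1 : ℝ) ≤ (n + 1 : ℝ) := by exact_mod_cast Nat.succ_le_succ hmn
      have : 1 / ((n:ℝ) + 1) ≤ 1 / ((m:ℝ) + 1) := by
        apply one_div_le_one_div_of_le (by positivity) h1
      linarith
    rw [hU, hmono.measure_iUnion]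
    refine iSup_le fun n => (hIic _).trans (measure_mono ?_)
    intro y hy
    simp only [mem_Iic] at hy
    simp only [mem_Iio]
    have : (0:ℝ) < 1 / (n + 1) := by positivity
    nlinarith
  set g' : ℝ → ℝ := fun u => (g u).toReal with hg'def
  have hgne : ∀ u, g u ≠ ⊤ := fun u => ((hg1 u).trans_lt ENNReal.one_lt_top).ne
  have hg' : Antitone g' := fun u v huv => ENNReal.toReal_mono (hgne u) (hg huv)
  have hof : ∀ u, ENNReal.ofReal (g' u) = g u := fun u => ENNReal.ofReal_toReal (hgne u)
  have hl : ∫⁻ u, g u ∂α = ∫⁻ v in Ioi (0:ℝ), α {u | v < g' u} := by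
    rw [← lintegral_eq_lintegral_meas_lt α (Filter.Eventually.of_forall fun u => ENNReal.toReal_nonneg)
      hg'.measurable.aemeasurable]
    exact lintegral_congr fun u => (hof u).symm
  have hg'2 : Antitone fun w => g' (r⁻¹ * w) := fun u v huv =>
    hg' (by have := inv_pos.mpr hr; nlinarith)
  have hr2 : ∫⁻ w, g (r⁻¹ * w) ∂β = ∫⁻ v in Ioi (0:ℝ), β {w | v < g' (r⁻¹ * w)} := by
    rw [← lintegral_eq_lintegral_meas_lt β (Filter.Eventually.of_forall fun u => ENNReal.toReal_nonneg)
      hg'2.measurable.aemeasurable]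
    exact lintegral_congr fun u => (hof _).symm
  rw [hl, hr2]
  refine lintegral_mono fun v => ?_
  -- claim: α {u | v < g' u} ≤ β {w | v < g' (r⁻¹ * w)}
  set U : Set ℝ := {u | v < g' u} with hUdef
  have hlow : ∀ u' u, u' ≤ u → u ∈ U → u' ∈ U := fun u' u h hu =>
    lt_of_lt_of_le hu (hg' h)
  have hpre : {w : ℝ | v < g' (r⁻¹ * w)} = (fun w => r⁻¹ * w) ⁻¹' U := rfl
  rw [hpre]
  rcases eq_empty_or_nonempty U with hne | hne
  · simp [hne]
  by_cases hbdd : BddAbove U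
  · set c := sSup U with hc
    by_cases hcU : c ∈ U
    · have hU : U = Iic c := by
        apply subset_antisymm (fun u hu => le_csSup hbdd hu) (fun u hu => hlow u c hu hcU)
      have hp : (fun w => r⁻¹ * w) ⁻¹' Iic c = Iic (r * c) := by
        ext w; simp only [mem_preimage, mem_Iic]; exact inv_mul_le_iff₀ hr
      rw [hU, hp]; exact hIic c
    · have hU : U = Iio c := by
        apply subset_antisymm
        · intro u hu
          exact lt_of_le_of_ne (le_csSup hbdd hu) (by rintro rfl; exact hcU hu)
        · intro u hu
          obtain ⟨w, hw, huw⟩ := exists_lt_of_lt_csSup hne hu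
          exact hlow u w huw.le hw
      have hp : (fun w => r⁻¹ * w) ⁻¹' Iio c = Iio (r * c) := by
        ext w; simp only [mem_preimage, mem_Iio]; exact inv_mul_lt_iff₀ hr
      rw [hU, hp]; exact hIio c
  · have hU : U = univ := eq_univ_of_forall fun u => by
      obtain ⟨w, hw, huw⟩ := not_bddAbove_iff.mp hbdd u
      exact hlow u w huw.le hw
    rw [hU]
    simp


/-- For i.i.d. real random variables, if the sample mean of size `s` stochastically
dominates the sample mean of size `t`, then for every positive integer `k`,
the sample mean of size `k*s` stochastically dominates that of size `k*t`. -/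
theorem sampleMean_stochDom_of_blocks {Ω : Type*} [MeasurableSpace Ω]
    (μ : Measure Ω) [IsProbabilityMeasure μ]
    (X : ℕ → Ω → ℝ) (hmeas : ∀ i, Measurable (X i))
    (hindep : iIndepFun X μ)
    (hident : ∀ i, μ.map (X i) = μ.map (X 0))
    (s t : ℕ) (hs : 0 < s) (ht : 0 < t)
    (hdom : ∀ x : ℝ,
      μ {ω | (∑ i ∈ Finset.range s, X i ω) / (s : ℝ) ≤ x}
        ≤ μ {ω | (∑ i ∈ Finset.range t, X i ω) / (t : ℝ) ≤ x})
    (k : ℕ) (hk : 0 < k) :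
    ∀ x : ℝ,
      μ {ω | (∑ i ∈ Finset.range (k * s), X i ω) / ((k * s : ℕ) : ℝ) ≤ x}
        ≤ μ {ω | (∑ i ∈ Finset.range (k * t), X i ω) / ((k * t : ℕ) : ℝ) ≤ x} := by
  classical
  have hSmeas : ∀ n : ℕ, Measurable fun ω => ∑ i ∈ Finset.range n, X i ω :=
    fun n => Finset.measurable_sum _ fun i _ => hmeas i
  set ν : Measure ℝ := μ.map (X 0) with hνdef
  have hνp : IsProbabilityMeasure ν := Measure.isProbabilityMeasure_map (hmeas 0).aemeasurable
  have hmap : ∀ n : ℕ, μ.map (fun ω => ∑ i ∈ Finset.range n, X i ω) = cp ν n := by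
    intro n
    induction n with
    | zero =>
      simp only [Finset.range_zero, Finset.sum_empty, cp_zero]
      rw [Measure.map_const, measure_univ, one_smul]
    | succ n ih =>
      have hi : IndepFun (fun ω => ∑ i ∈ Finset.range n, X i ω) (X n) μ := by
        have h := hindep.indepFun_sum_range_succ hmeas n
        have : (∑ j ∈ Finset.range n, X j) = fun ω => ∑ i ∈ Finset.range n, X i ω := by
          funext ω; simp
        rwa [this] at h
      have hpair : μ.map (fun ω => ((∑ i ∈ Finset.range n, X i ω), X n ω))
          = (μ.map fun ω => ∑ i ∈ Finset.range n, X i ω).prod (μ.map (X n)) :=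
        (indepFun_iff_map_prod_eq_prod_map_map (hSmeas n).aemeasurable
          (hmeas n).aemeasurable).mp hi
      have hcomp : (fun ω => ∑ i ∈ Finset.range (n+1), X i ω)
          = (fun p : ℝ × ℝ => p.1 + p.2) ∘
            (fun ω => ((∑ i ∈ Finset.range n, X i ω), X n ω)) := by
        funext ω; simp [Finset.sum_range_succ]
      rw [hcomp, ← Measure.map_map measurable_add ((hSmeas n).prodMk (hmeas n)), hpair, ih,
        hident n]
      rfl
  have key : ∀ (n : ℕ), 0 < n → ∀ x : ℝ,
      μ {ω | (∑ i ∈ Finset.range n, X i ω) / (n : ℝ) ≤ x} = cp ν n (Iic ((n:ℝ) * x)) := by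
    intro n hn x
    have hnR : (0:ℝ) < n := by exact_mod_cast hn
    have hset : {ω | (∑ i ∈ Finset.range n, X i ω) / (n : ℝ) ≤ x}
        = (fun ω => ∑ i ∈ Finset.range n, X i ω) ⁻¹' Iic ((n:ℝ) * x) := by
      ext ω
      simp only [Set.mem_setOf_eq, mem_preimage, mem_Iic, div_le_iff₀ hnR]
      rw [mul_comm]
    rw [hset, ← Measure.map_apply (hSmeas n) measurableSet_Iic, hmap n]
  have hsR : (0:ℝ) < s := by exact_mod_cast hs
  have htR : (0:ℝ) < t := by exact_mod_cast ht
  have hdom' : ∀ y : ℝ, cp ν s (Iic ((s:ℝ) * y)) ≤ cp ν t (Iic ((t:ℝ) * y)) := fun y => by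
    rw [← key s hs y, ← key t ht y]; exact hdom y
  have claim : ∀ (j : ℕ) (x : ℝ),
      cp ν (j*s) (Iic ((j:ℝ) * (s:ℝ) * x)) ≤ cp ν (j*t) (Iic ((j:ℝ) * (t:ℝ) * x)) := by
    intro j
    induction j with
    | zero =>
      intro x
      norm_num [Measure.dirac_apply]
    | succ j ih =>
      intro x
      rcases Nat.eq_zero_or_pos j with rfl | hj
      · simpa using hdom' x
      have hjR : (0:ℝ) < j := by exact_mod_cast hj
      have e1 : cp ν ((j+1)*s) = (cp ν (j*s)).conv (cp ν s) := by
        rw [Nat.succ_mul, cp_add]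
      have e2 : cp ν ((j+1)*t) = (cp ν (j*t)).conv (cp ν t) := by
        rw [Nat.succ_mul, cp_add]
      push_cast
      rw [e1, e2, conv_Iic, conv_Iic]
      set Cs : ℝ := ((j:ℝ)+1) * s * x with hCs
      set Ct : ℝ := ((j:ℝ)+1) * t * x with hCt
      calc ∫⁻ u, cp ν s (Iic (Cs - u)) ∂(cp ν (j*s))
          ≤ ∫⁻ u, cp ν t (Iic (Ct - ((t:ℝ)/s)*u)) ∂(cp ν (j*s)) := by
            refine lintegral_mono fun u => ?_
            have h := hdom' ((Cs - u)/s)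
            rw [show (s:ℝ) * ((Cs - u)/s) = Cs - u by field_simp] at h
            rw [show (t:ℝ) * ((Cs - u)/s) = Ct - ((t:ℝ)/s)*u by
              rw [hCs, hCt]; field_simp] at h
            exact h
        _ ≤ ∫⁻ w, cp ν t (Iic (Ct - ((t:ℝ)/s)*(((t:ℝ)/s)⁻¹ * w))) ∂(cp ν (j*t)) := by
            refine lintegral_antitone_le _ _ ((t:ℝ)/s) (by positivity) ?_ _ ?_ ?_
            · intro c
              have h := ih (c / ((j:ℝ)*s))
              rw [show (j:ℝ)*(s:ℝ)*(c/((j:ℝ)*s)) = c by field_simp] at h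
              rw [show (j:ℝ)*(t:ℝ)*(c/((j:ℝ)*s)) = ((t:ℝ)/s)*c by field_simp] at h
              exact h
            · intro u1 u2 h12
              refine measure_mono (Iic_subset_Iic.mpr ?_)
              have hts : (0:ℝ) < (t:ℝ)/s := by positivity
              nlinarith
            · intro u; exact prob_le_one
        _ = ∫⁻ w, cp ν t (Iic (Ct - w)) ∂(cp ν (j*t)) := by
            refine lintegral_congr fun w => ?_
            rw [mul_inv_cancel_left₀ (by positivity : ((t:ℝ)/s) ≠ 0)]
  intro x
  rw [key (k*s) (Nat.mul_pos hk hs) x, key (k*t) (Nat.mul_pos hk ht) x]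
  push_cast
  exact claim k x
end

section
/- Let X₁, X₂, ... be i.i.d. real random variables and suppose X̄_s ≥_st X₁ for some integer s ≥ 2. Let η = (η₁,...,η_k) be a vector of nonnegative weights and let θ be obtained from η by replacing the j-th coordinate η_j by s equal coordinates η_j/s each (an s-split). Then θ₁X₁ + ... + θ_{k+s-1}X_{k+s-1} ≥_st η₁X₁ + ... + η_kX_k. -/
open MeasureTheory ProbabilityTheory

lemma tuple_map_eq_pi {Ω : Type*} [MeasurableSpace Ω] (μ : Measure Ω) [IsProbabilityMeasure μ]
    (X : ℕ → Ω → ℝ) (hmeas : ∀ i, Measurable (X i))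
    (hindep : iIndepFun X μ)
    (hident : ∀ i, μ.map (X i) = μ.map (X 0))
    {n : ℕ} (g : Fin n → ℕ) (hg : Function.Injective g) :
    μ.map (fun ω (i : Fin n) => X (g i) ω) = Measure.pi (fun _ => μ.map (X 0)) := by
  classical
  haveI hprob : IsProbabilityMeasure (μ.map (X 0)) :=
    Measure.isProbabilityMeasure_map (hmeas 0).aemeasurable
  refine (Measure.pi_eq (μ := fun _ : Fin n => μ.map (X 0)) fun s hs => ?_).symm
  set sets : ℕ → Set ℝ := fun m => if h : ∃ i, g i = m then s h.choose else Set.univ with hsets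
  have hsg : ∀ i, sets (g i) = s i := by
    intro i
    have h : ∃ i', g i' = g i := ⟨i, rfl⟩
    simp only [hsets, dif_pos h]
    rw [hg h.choose_spec]
  have hsetsm : ∀ m, MeasurableSet (sets m) := by
    intro m
    simp only [hsets]
    split
    · exact hs _
    · exact MeasurableSet.univ
  rw [Measure.map_apply (measurable_pi_lambda _ fun i => hmeas (g i))
    (MeasurableSet.univ_pi hs)]
  have hpre : (fun ω (i : Fin n) => X (g i) ω) ⁻¹' Set.pi Set.univ s
      = ⋂ m ∈ Finset.image g Finset.univ, X m ⁻¹' sets m := by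
    ext ω
    simp only [Set.mem_preimage, Set.mem_pi, Set.mem_univ, forall_true_left,
      Set.mem_iInter, Finset.mem_image, Finset.mem_univ, true_and, forall_exists_index]
    constructor
    · rintro h m i rfl; rw [hsg]; exact h i
    · intro h i; rw [← hsg]; exact h (g i) i rfl
  rw [hpre, hindep.measure_inter_preimage_eq_mul _ (fun m _ => hsetsm m),
    Finset.prod_image (fun a _ b _ h => hg h)]
  refine Finset.prod_congr rfl fun i _ => ?_
  rw [hsg, ← Measure.map_apply (hmeas (g i)) (hs i), hident (g i)]

lemma stat_map_eq {Ω : Type*} [MeasurableSpace Ω] (μ : Measure Ω) [IsProbabilityMeasure μ]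
    (X : ℕ → Ω → ℝ) (hmeas : ∀ i, Measurable (X i))
    (hindep : iIndepFun X μ)
    (hident : ∀ i, μ.map (X i) = μ.map (X 0))
    {n : ℕ} (g₁ g₂ : Fin n → ℕ) (hg₁ : Function.Injective g₁)
    (hg₂ : Function.Injective g₂) {F : (Fin n → ℝ) → ℝ} (hF : Measurable F) :
    μ.map (fun ω => F (fun i => X (g₁ i) ω)) = μ.map (fun ω => F (fun i => X (g₂ i) ω)) := by
  have h₁ := tuple_map_eq_pi μ X hmeas hindep hident g₁ hg₁
  have h₂ := tuple_map_eq_pi μ X hmeas hindep hident g₂ hg₂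
  calc μ.map (fun ω => F (fun i => X (g₁ i) ω))
      = (μ.map (fun ω (i : Fin n) => X (g₁ i) ω)).map F :=
        (Measure.map_map hF (measurable_pi_lambda _ fun i => hmeas _)).symm
    _ = (μ.map (fun ω (i : Fin n) => X (g₂ i) ω)).map F := by rw [h₁, h₂]
    _ = μ.map (fun ω => F (fun i => X (g₂ i) ω)) :=
        Measure.map_map hF (measurable_pi_lambda _ fun i => hmeas _)

lemma add_indep_mono {Ω : Type*} [MeasurableSpace Ω] (μ : Measure Ω) [IsProbabilityMeasure μ]
    {T₁ T₂ W₁ W₂ : Ω → ℝ} (hT₁ : Measurable T₁) (hT₂ : Measurable T₂)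
    (hW₁ : Measurable W₁) (hW₂ : Measurable W₂)
    (h₁ : IndepFun W₁ T₁ μ) (h₂ : IndepFun W₂ T₂ μ)
    (hW : μ.map W₁ = μ.map W₂)
    (hT : ∀ y : ℝ, μ {ω | T₁ ω ≤ y} ≤ μ {ω | T₂ ω ≤ y}) (x : ℝ) :
    μ {ω | T₁ ω + W₁ ω ≤ x} ≤ μ {ω | T₂ ω + W₂ ω ≤ x} := by
  have hmset : MeasurableSet {p : ℝ × ℝ | p.2 + p.1 ≤ x} :=
    measurableSet_le (by fun_prop) measurable_const
  have key : ∀ (T W : Ω → ℝ), Measurable T → Measurable W → IndepFun W T μ →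
      μ {ω | T ω + W ω ≤ x} = ∫⁻ w, (μ.map T) {t | t + w ≤ x} ∂(μ.map W) := by
    intro T W hT hW hWT
    have h1 : {ω | T ω + W ω ≤ x} = (fun ω => (W ω, T ω)) ⁻¹' {p | p.2 + p.1 ≤ x} := rfl
    rw [h1, ← Measure.map_apply (hW.prodMk hT) hmset,
      (indepFun_iff_map_prod_eq_prod_map_map hW.aemeasurable hT.aemeasurable).mp hWT,
      Measure.prod_apply hmset]
    rfl
  rw [key T₁ W₁ hT₁ hW₁ h₁, key T₂ W₂ hT₂ hW₂ h₂, hW]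
  refine lintegral_mono fun w => ?_
  have e : ∀ (T : Ω → ℝ), Measurable T →
      (μ.map T) {t | t + w ≤ x} = μ {ω | T ω ≤ x - w} := by
    intro T hT
    rw [Measure.map_apply hT (measurableSet_le (by fun_prop) measurable_const)]
    congr 1
    ext ω
    simp only [Set.mem_preimage, Set.mem_setOf_eq]
    constructor <;> intro h <;> linarith
  rw [e T₁ hT₁, e T₂ hT₂]
  exact hT _
lemma stat_map_eq' {Ω : Type*} [MeasurableSpace Ω] (μ : Measure Ω) [IsProbabilityMeasure μ]
    (X : ℕ → Ω → ℝ) (hmeas : ∀ i, Measurable (X i))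
    (hindep : iIndepFun X μ)
    (hident : ∀ i, μ.map (X i) = μ.map (X 0))
    {n : ℕ} (g₁ g₂ : Fin n → ℕ) (hg₁ : Function.Injective g₁)
    (hg₂ : Function.Injective g₂) {F : (Fin n → ℝ) → ℝ} (hF : Measurable F)
    (G₁ G₂ : Ω → ℝ)
    (hG₁ : ∀ ω, G₁ ω = F (fun i => X (g₁ i) ω))
    (hG₂ : ∀ ω, G₂ ω = F (fun i => X (g₂ i) ω)) :
    μ.map G₁ = μ.map G₂ := by
  rw [show G₁ = fun ω => F (fun i => X (g₁ i) ω) from funext hG₁,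
    show G₂ = fun ω => F (fun i => X (g₂ i) ω) from funext hG₂]
  exact stat_map_eq μ X hmeas hindep hident g₁ g₂ hg₁ hg₂ hF

lemma sum_split_aux {k j : ℕ} (hj : j < k) (η : ℕ → ℝ) (f : ℕ → ℝ) :
    (∑ i : Fin k, (if (i : ℕ) = j then 0 else η i) * f i)
      = (∑ i ∈ Finset.range j, η i * f i) + ∑ i ∈ Finset.Ico (j + 1) k, η i * f i := by
  rw [Fin.sum_univ_eq_sum_range (fun m => (if m = j then 0 else η m) * f m) k,
    ← Finset.sum_range_add_sum_Ico _ hj.le, Finset.sum_eq_sum_Ico_succ_bot hj,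
    if_pos rfl, zero_mul, zero_add]
  congr 1
  · exact Finset.sum_congr rfl fun i hi => by
      rw [Finset.mem_range] at hi; rw [if_neg (by omega)]
  · exact Finset.sum_congr rfl fun i hi => by
      rw [Finset.mem_Ico] at hi; rw [if_neg (by omega)]

lemma sum_split_aux' {k j : ℕ} (hj : j < k) (η : ℕ → ℝ) (f : ℕ → ℝ) :
    (∑ i ∈ Finset.range k, η i * f i)
      = η j * f j + ((∑ i ∈ Finset.range j, η i * f i)
          + ∑ i ∈ Finset.Ico (j + 1) k, η i * f i) := by
  rw [← Finset.sum_range_add_sum_Ico _ hj.le, Finset.sum_eq_sum_Ico_succ_bot hj]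
  ring

/-- If `X̄_s ≥_st X₁` for i.i.d. variables, and the weight vector `θ` is obtained
from the nonnegative weight vector `η = (η 0, …, η (k-1))` by an `s`-split of the
`j`-th coordinate (replacing `η j` by `s` coordinates equal to `η j / s`), then
the `θ`-combination stochastically dominates the `η`-combination. -/
theorem split_stochDom {Ω : Type*} [MeasurableSpace Ω]
    (μ : Measure Ω) [IsProbabilityMeasure μ]
    (X : ℕ → Ω → ℝ) (hmeas : ∀ i, Measurable (X i))
    (hindep : iIndepFun X μ)
    (hident : ∀ i, μ.map (X i) = μ.map (X 0))
    (s : ℕ) (hs : 2 ≤ s)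
    (hdom : ∀ x : ℝ,
      μ {ω | (∑ i ∈ Finset.range s, X i ω) / (s : ℝ) ≤ x} ≤ μ {ω | X 0 ω ≤ x})
    (k : ℕ) (η : ℕ → ℝ) (hη : ∀ i, 0 ≤ η i) (j : ℕ) (hj : j < k) :
    ∀ x : ℝ,
      μ {ω | (∑ i ∈ Finset.range j, η i * X i ω)
            + (∑ m ∈ Finset.range s, (η j / (s : ℝ)) * X (j + m) ω)
            + (∑ i ∈ Finset.Ico (j + 1) k, η i * X (i + s - 1) ω) ≤ x}
        ≤ μ {ω | ∑ i ∈ Finset.range k, η i * X i ω ≤ x} := by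
  intro x
  classical
  have hspos : (0:ℝ) < (s:ℝ) := by exact_mod_cast (by omega : (0:ℕ) < s)
  -- measurability of the four building blocks
  have hYm : Measurable (fun ω => ∑ m ∈ Finset.range s, η j / (s:ℝ) * X (j + m) ω) :=
    Finset.measurable_sum _ fun m _ => (hmeas (j + m)).const_mul _
  have hZm : Measurable (fun ω => η j * X j ω) := (hmeas j).const_mul _
  have hWm : Measurable (fun ω => (∑ i ∈ Finset.range j, η i * X i ω)
      + ∑ i ∈ Finset.Ico (j + 1) k, η i * X (i + s - 1) ω) :=
    (Finset.measurable_sum _ fun i _ => (hmeas i).const_mul _).add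
      (Finset.measurable_sum _ fun i _ => (hmeas _).const_mul _)
  have hW'm : Measurable (fun ω => (∑ i ∈ Finset.range j, η i * X i ω)
      + ∑ i ∈ Finset.Ico (j + 1) k, η i * X i ω) :=
    (Finset.measurable_sum _ fun i _ => (hmeas i).const_mul _).add
      (Finset.measurable_sum _ fun i _ => (hmeas _).const_mul _)
  -- the block sum has the same law as the initial block sum
  have hlawS : μ.map (fun ω => ∑ m ∈ Finset.range s, X (j + m) ω)
      = μ.map (fun ω => ∑ i ∈ Finset.range s, X i ω) :=
    stat_map_eq' μ X hmeas hindep hident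
      (fun i : Fin s => j + (i : ℕ)) (fun i : Fin s => (i : ℕ))
      (fun a b hab => by simp only at hab; exact Fin.ext (by omega))
      Fin.val_injective
      (F := fun v : Fin s → ℝ => ∑ i, v i)
      (Finset.measurable_sum _ fun i _ => measurable_pi_apply i) _ _
      (fun ω => (Fin.sum_univ_eq_sum_range (fun m => X (j + m) ω) s).symm)
      (fun ω => (Fin.sum_univ_eq_sum_range (fun m => X m ω) s).symm)
  -- stochastic dominance of block mean over a single variable (index j)
  have hSdom : ∀ u : ℝ, μ {ω | (∑ m ∈ Finset.range s, X (j + m) ω) / (s:ℝ) ≤ u}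
      ≤ μ {ω | X j ω ≤ u} := by
    intro u
    have hmS : Measurable fun ω => ∑ m ∈ Finset.range s, X (j + m) ω :=
      Finset.measurable_sum _ fun m _ => hmeas _
    have hmS0 : Measurable fun ω => ∑ i ∈ Finset.range s, X i ω :=
      Finset.measurable_sum _ fun m _ => hmeas _
    have hset : MeasurableSet {t : ℝ | t / (s:ℝ) ≤ u} :=
      measurableSet_le (measurable_id.div_const _) measurable_const
    have hset' : MeasurableSet {t : ℝ | t ≤ u} :=
      measurableSet_le measurable_id measurable_const
    calc μ {ω | (∑ m ∈ Finset.range s, X (j + m) ω) / (s:ℝ) ≤ u}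
        = (μ.map (fun ω => ∑ m ∈ Finset.range s, X (j + m) ω)) {t | t / (s:ℝ) ≤ u} := by
          rw [Measure.map_apply hmS hset]; rfl
      _ = (μ.map (fun ω => ∑ i ∈ Finset.range s, X i ω)) {t | t / (s:ℝ) ≤ u} := by
          rw [hlawS]
      _ = μ {ω | (∑ i ∈ Finset.range s, X i ω) / (s:ℝ) ≤ u} := by
          rw [Measure.map_apply hmS0 hset]; rfl
      _ ≤ μ {ω | X 0 ω ≤ u} := hdom u
      _ = (μ.map (X 0)) {t | t ≤ u} := by rw [Measure.map_apply (hmeas 0) hset']; rfl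
      _ = (μ.map (X j)) {t | t ≤ u} := by rw [hident j]
      _ = μ {ω | X j ω ≤ u} := by rw [Measure.map_apply (hmeas j) hset']; rfl
  -- CDF comparison between the scaled block sum and the single scaled variable
  have hYZ : ∀ y : ℝ, μ {ω | (∑ m ∈ Finset.range s, η j / (s:ℝ) * X (j + m) ω) ≤ y}
      ≤ μ {ω | η j * X j ω ≤ y} := by
    intro y
    rcases (hη j).eq_or_lt with hc | hc
    · have h1 : {ω : Ω | (∑ m ∈ Finset.range s, η j / (s:ℝ) * X (j + m) ω) ≤ y}
          = {ω : Ω | (0:ℝ) ≤ y} := by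
        ext ω; simp [← hc]
      have h2 : {ω : Ω | η j * X j ω ≤ y} = {ω : Ω | (0:ℝ) ≤ y} := by
        ext ω; simp [← hc]
      rw [h1, h2]
    · have h1 : {ω : Ω | (∑ m ∈ Finset.range s, η j / (s:ℝ) * X (j + m) ω) ≤ y}
          = {ω : Ω | (∑ m ∈ Finset.range s, X (j + m) ω) / (s:ℝ) ≤ y / η j} := by
        ext ω
        simp only [Set.mem_setOf_eq, ← Finset.mul_sum]
        rw [div_mul_eq_mul_div, div_le_iff₀ hspos, div_le_div_iff₀ hspos hc, mul_comm]
      have h2 : {ω : Ω | η j * X j ω ≤ y} = {ω : Ω | X j ω ≤ y / η j} := by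
        ext ω
        simp only [Set.mem_setOf_eq]
        rw [mul_comm]
        exact (le_div_iff₀ hc).symm
      rw [h1, h2]
      exact hSdom _
  -- equality in law of the two "rest" statistics
  have hWW' : μ.map (fun ω => (∑ i ∈ Finset.range j, η i * X i ω)
        + ∑ i ∈ Finset.Ico (j + 1) k, η i * X (i + s - 1) ω)
      = μ.map (fun ω => (∑ i ∈ Finset.range j, η i * X i ω)
        + ∑ i ∈ Finset.Ico (j + 1) k, η i * X i ω) := by
    have hinj1 : Function.Injective
        (fun i : Fin k => if (i:ℕ) ≤ j then (i:ℕ) else (i:ℕ) + s - 1) := by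
      intro a b hab
      simp only at hab
      apply Fin.ext
      split_ifs at hab <;> omega
    have e1 : ∀ ω : Ω, ((∑ i ∈ Finset.range j, η i * X i ω)
          + ∑ i ∈ Finset.Ico (j + 1) k, η i * X (i + s - 1) ω)
        = ∑ i : Fin k, (if (i : ℕ) = j then 0 else η i)
            * X (if (i:ℕ) ≤ j then (i:ℕ) else (i:ℕ) + s - 1) ω := by
      intro ω
      refine ((sum_split_aux hj η
        (fun m => X (if m ≤ j then m else m + s - 1) ω)).trans ?_).symm
      congr 1
      · exact Finset.sum_congr rfl fun i hi => by
          rw [Finset.mem_range] at hi; rw [if_pos (by omega)]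
      · exact Finset.sum_congr rfl fun i hi => by
          rw [Finset.mem_Ico] at hi; rw [if_neg (by omega)]
    have e2 : ∀ ω : Ω, ((∑ i ∈ Finset.range j, η i * X i ω)
          + ∑ i ∈ Finset.Ico (j + 1) k, η i * X i ω)
        = ∑ i : Fin k, (if (i : ℕ) = j then 0 else η i) * X (i:ℕ) ω :=
      fun ω => (sum_split_aux hj η (fun m => X m ω)).symm
    exact stat_map_eq' μ X hmeas hindep hident
      (fun i : Fin k => if (i:ℕ) ≤ j then (i:ℕ) else (i:ℕ) + s - 1)
      (fun i : Fin k => (i:ℕ)) hinj1 Fin.val_injective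
      (F := fun v : Fin k → ℝ => ∑ i : Fin k, (if (i : ℕ) = j then 0 else η i) * v i)
      (Finset.measurable_sum _ fun i _ => (measurable_pi_apply i).const_mul _)
      _ _ e1 e2
  -- independence of the block part from the rest (LHS)
  have hInd1 : IndepFun
      (fun ω => (∑ i ∈ Finset.range j, η i * X i ω)
        + ∑ i ∈ Finset.Ico (j + 1) k, η i * X (i + s - 1) ω)
      (fun ω => ∑ m ∈ Finset.range s, η j / (s:ℝ) * X (j + m) ω) μ := by
    have hdisj : Disjoint (Finset.range j ∪ Finset.Ico (j + s) (k + s - 1))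
        (Finset.Ico j (j + s)) := by
      simp only [Finset.disjoint_left, Finset.mem_union, Finset.mem_range, Finset.mem_Ico]
      rintro a (ha | ha) hb <;> omega
    have hphim : Measurable (fun v : (↥(Finset.range j ∪ Finset.Ico (j + s) (k + s - 1)) → ℝ) =>
        (∑ i ∈ (Finset.range j).attach,
            η i * v ⟨(i:ℕ), Finset.mem_union_left _ i.2⟩)
          + ∑ i ∈ (Finset.Ico (j + 1) k).attach,
            η i * v ⟨(i:ℕ) + s - 1, Finset.mem_union_right _ (by
              have h2 := i.2; rw [Finset.mem_Ico] at h2 ⊢; omega)⟩) := by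
      refine Measurable.add ?_ ?_ <;>
        refine Finset.measurable_sum _ fun i _ => ?_ <;>
          exact (measurable_pi_apply _).const_mul _
    have hpsim : Measurable (fun v : (↥(Finset.Ico j (j + s)) → ℝ) =>
        ∑ m ∈ (Finset.range s).attach,
          η j / (s:ℝ) * v ⟨j + (m:ℕ), by
            have h2 := m.2; rw [Finset.mem_range] at h2; rw [Finset.mem_Ico]; omega⟩) := by
      refine Finset.measurable_sum _ fun i _ => ?_
      exact (measurable_pi_apply _).const_mul _
    have h := (hindep.indepFun_finset _ _ hdisj hmeas).comp hphim hpsim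
    have eW : ∀ ω : Ω, ((∑ i ∈ (Finset.range j).attach, η (i:ℕ) * X (i:ℕ) ω)
          + ∑ i ∈ (Finset.Ico (j + 1) k).attach, η (i:ℕ) * X ((i:ℕ) + s - 1) ω)
        = (∑ i ∈ Finset.range j, η i * X i ω)
          + ∑ i ∈ Finset.Ico (j + 1) k, η i * X (i + s - 1) ω := fun ω => by
      rw [Finset.sum_attach (Finset.range j) (fun m => η m * X m ω),
        Finset.sum_attach (Finset.Ico (j + 1) k) (fun m => η m * X (m + s - 1) ω)]
    have eY : ∀ ω : Ω, (∑ m ∈ (Finset.range s).attach, η j / (s:ℝ) * X (j + (m:ℕ)) ω)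
        = ∑ m ∈ Finset.range s, η j / (s:ℝ) * X (j + m) ω := fun ω => by
      rw [Finset.sum_attach (Finset.range s) (fun m => η j / (s:ℝ) * X (j + m) ω)]
    exact h.congr (Filter.Eventually.of_forall eW) (Filter.Eventually.of_forall eY)
  -- independence of the single variable from the rest (RHS)
  have hInd2 : IndepFun
      (fun ω => (∑ i ∈ Finset.range j, η i * X i ω)
        + ∑ i ∈ Finset.Ico (j + 1) k, η i * X i ω)
      (fun ω => η j * X j ω) μ := by
    have hdisj : Disjoint (Finset.range j ∪ Finset.Ico (j + 1) k) ({j} : Finset ℕ) := by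
      simp only [Finset.disjoint_left, Finset.mem_union, Finset.mem_range, Finset.mem_Ico,
        Finset.mem_singleton]
      rintro a (ha | ha) hb <;> omega
    have hphim : Measurable (fun v : (↥(Finset.range j ∪ Finset.Ico (j + 1) k) → ℝ) =>
        (∑ i ∈ (Finset.range j).attach,
            η i * v ⟨(i:ℕ), Finset.mem_union_left _ i.2⟩)
          + ∑ i ∈ (Finset.Ico (j + 1) k).attach,
            η i * v ⟨(i:ℕ), Finset.mem_union_right _ i.2⟩) := by
      refine Measurable.add ?_ ?_ <;>
        refine Finset.measurable_sum _ fun i _ => ?_ <;>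
          exact (measurable_pi_apply _).const_mul _
    have hpsim : Measurable (fun v : (↥({j} : Finset ℕ) → ℝ) =>
        η j * v ⟨j, Finset.mem_singleton_self j⟩) :=
      (measurable_pi_apply _).const_mul _
    have h := (hindep.indepFun_finset _ _ hdisj hmeas).comp hphim hpsim
    have eW : ∀ ω : Ω, ((∑ i ∈ (Finset.range j).attach, η (i:ℕ) * X (i:ℕ) ω)
          + ∑ i ∈ (Finset.Ico (j + 1) k).attach, η (i:ℕ) * X (i:ℕ) ω)
        = (∑ i ∈ Finset.range j, η i * X i ω)
          + ∑ i ∈ Finset.Ico (j + 1) k, η i * X i ω := fun ω => by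
      rw [Finset.sum_attach (Finset.range j) (fun m => η m * X m ω),
        Finset.sum_attach (Finset.Ico (j + 1) k) (fun m => η m * X m ω)]
    exact h.congr (Filter.Eventually.of_forall eW)
      (Filter.Eventually.of_forall fun ω => rfl)
  -- put the pieces together
  have key := add_indep_mono μ hYm hZm hWm hW'm hInd1 hInd2 hWW' hYZ x
  have eL : {ω : Ω | (∑ i ∈ Finset.range j, η i * X i ω)
        + (∑ m ∈ Finset.range s, (η j / (s : ℝ)) * X (j + m) ω)
        + (∑ i ∈ Finset.Ico (j + 1) k, η i * X (i + s - 1) ω) ≤ x}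
      = {ω : Ω | (∑ m ∈ Finset.range s, η j / (s:ℝ) * X (j + m) ω)
        + ((∑ i ∈ Finset.range j, η i * X i ω)
          + ∑ i ∈ Finset.Ico (j + 1) k, η i * X (i + s - 1) ω) ≤ x} := by
    ext ω
    simp only [Set.mem_setOf_eq]
    constructor <;> intro h <;> linarith
  have eR : {ω : Ω | ∑ i ∈ Finset.range k, η i * X i ω ≤ x}
      = {ω : Ω | η j * X j ω + ((∑ i ∈ Finset.range j, η i * X i ω)
          + ∑ i ∈ Finset.Ico (j + 1) k, η i * X i ω) ≤ x} := by
    ext ω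
    simp only [Set.mem_setOf_eq]
    rw [sum_split_aux' hj η (fun i => X i ω)]
  exact le_trans (le_of_eq (congrArg μ eL)) (le_trans key (le_of_eq (congrArg μ eR.symm)))
end

section
/- Let θ ∈ ℝ^s and η ∈ ℝ^t be weight vectors, X₁, X₂, ... i.i.d. real random variables, and suppose Σᵢ θᵢ Xᵢ ≥_st Σⱼ ηⱼ Xⱼ. Then for every vector π ∈ ℝ^k with nonnegative entries, Σ_{i=1}^{sk} (θ ⊗ π)ᵢ Xᵢ ≥_st Σ_{j=1}^{tk} (η ⊗ π)ⱼ Xⱼ, where ⊗ denotes the Kronecker product of vectors. -/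
open MeasureTheory ProbabilityTheory

lemma indep_wsum {Ω : Type*} [MeasurableSpace Ω] (μ : Measure Ω)
    (X : ℕ → Ω → ℝ) (hmeas : ∀ i, Measurable (X i))
    (hindep : iIndepFun X μ)
    (c d : ℕ → ℝ) (S T : Finset ℕ) (hST : Disjoint S T) :
    IndepFun (fun ω => ∑ i ∈ S, c i * X i ω) (fun ω => ∑ i ∈ T, d i * X i ω) μ := by
  have h := hindep.indepFun_finset S T hST hmeas
  have hφ : Measurable (fun v : {x // x ∈ S} → ℝ => ∑ i ∈ S.attach, c i.1 * v i) := by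
    apply Finset.measurable_sum
    intro i _
    exact (measurable_pi_apply i).const_mul _
  have hψ : Measurable (fun v : {x // x ∈ T} → ℝ => ∑ i ∈ T.attach, d i.1 * v i) := by
    apply Finset.measurable_sum
    intro i _
    exact (measurable_pi_apply i).const_mul _
  have h2 := h.comp hφ hψ
  convert h2 using 1 <;> funext ω <;> simp only [Function.comp] <;>
    rw [← Finset.sum_attach _ (fun i => _ * X i ω)]


lemma law_add_eq {Ω : Type*} [MeasurableSpace Ω] (μ : Measure Ω) [IsProbabilityMeasure μ]
    {A B A' B' : Ω → ℝ} (hA : Measurable A) (hB : Measurable B)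
    (hA' : Measurable A') (hB' : Measurable B')
    (hAB : IndepFun A B μ) (hAB' : IndepFun A' B' μ)
    (h1 : μ.map A = μ.map A') (h2 : μ.map B = μ.map B') :
    μ.map (fun ω => A ω + B ω) = μ.map (fun ω => A' ω + B' ω) := by
  have e1 : μ.map (fun ω => A ω + B ω)
      = (μ.map (fun ω => (A ω, B ω))).map (fun p : ℝ × ℝ => p.1 + p.2) := by
    rw [Measure.map_map measurable_add (hA.prodMk hB)]; rfl
  have e2 : μ.map (fun ω => A' ω + B' ω)
      = (μ.map (fun ω => (A' ω, B' ω))).map (fun p : ℝ × ℝ => p.1 + p.2) := by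
    rw [Measure.map_map measurable_add (hA'.prodMk hB')]; rfl
  rw [e1, e2,
    (indepFun_iff_map_prod_eq_prod_map_map hA.aemeasurable hB.aemeasurable).mp hAB,
    (indepFun_iff_map_prod_eq_prod_map_map hA'.aemeasurable hB'.aemeasurable).mp hAB',
    h1, h2]

lemma cdf_add_le {Ω : Type*} [MeasurableSpace Ω] (μ : Measure Ω) [IsProbabilityMeasure μ]
    {U U' W : Ω → ℝ} (hU : Measurable U) (hU' : Measurable U') (hW : Measurable W)
    (hUW : IndepFun U W μ) (hU'W : IndepFun U' W μ)
    (hcdf : ∀ y : ℝ, μ {ω | U ω ≤ y} ≤ μ {ω | U' ω ≤ y}) (x : ℝ) :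
    μ {ω | U ω + W ω ≤ x} ≤ μ {ω | U' ω + W ω ≤ x} := by
  haveI : IsProbabilityMeasure (μ.map W) := Measure.isProbabilityMeasure_map hW.aemeasurable
  haveI : IsProbabilityMeasure (μ.map U) := Measure.isProbabilityMeasure_map hU.aemeasurable
  haveI : IsProbabilityMeasure (μ.map U') := Measure.isProbabilityMeasure_map hU'.aemeasurable
  have hset : MeasurableSet {p : ℝ × ℝ | p.2 + p.1 ≤ x} :=
    measurableSet_le (measurable_snd.add measurable_fst) measurable_const
  have key : ∀ (V : Ω → ℝ), Measurable V → IndepFun V W μ →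
      μ {ω | V ω + W ω ≤ x} = ∫⁻ w, (μ.map V) (Set.Iic (x - w)) ∂(μ.map W) := by
    intro V hV hVW
    have hpair : μ.map (fun ω => (W ω, V ω)) = (μ.map W).prod (μ.map V) :=
      (indepFun_iff_map_prod_eq_prod_map_map hW.aemeasurable hV.aemeasurable).mp hVW.symm
    have : μ {ω | V ω + W ω ≤ x}
        = (μ.map (fun ω => (W ω, V ω))) {p : ℝ × ℝ | p.2 + p.1 ≤ x} := by
      rw [Measure.map_apply (hW.prodMk hV) hset]
      rfl
    rw [this, hpair, Measure.prod_apply hset]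
    congr 1
    funext w
    congr 1
    ext u
    simp [Set.mem_Iic]
    constructor
    · intro h; linarith
    · intro h; linarith
  rw [key U hU hUW, key U' hU' hU'W]
  apply lintegral_mono
  intro w
  show (μ.map U) (Set.Iic (x - w)) ≤ (μ.map U') (Set.Iic (x - w))
  have := hcdf (x - w)
  rwa [Measure.map_apply hU measurableSet_Iic, Measure.map_apply hU' measurableSet_Iic]

lemma wsum_meas {Ω : Type*} [MeasurableSpace Ω]
    (X : ℕ → Ω → ℝ) (hmeas : ∀ i, Measurable (X i)) (c : ℕ → ℝ) (S : Finset ℕ)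
    (g : ℕ → ℕ) : Measurable (fun ω => ∑ i ∈ S, c i * X (g i) ω) :=
  Finset.measurable_sum _ (fun i _ => ((hmeas (g i)).const_mul _))

/-- The law of a weighted sum of iid variables is invariant under injective reindexing. -/
lemma map_wsum_reindex {Ω : Type*} [MeasurableSpace Ω] (μ : Measure Ω) [IsProbabilityMeasure μ]
    (X : ℕ → Ω → ℝ) (hmeas : ∀ i, Measurable (X i))
    (hindep : iIndepFun X μ)
    (hident : ∀ i, μ.map (X i) = μ.map (X 0))
    (c : ℕ → ℝ) (g : ℕ → ℕ) (hg : Function.Injective g) :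
    ∀ s : ℕ, μ.map (fun ω => ∑ i ∈ Finset.range s, c i * X (g i) ω)
      = μ.map (fun ω => ∑ i ∈ Finset.range s, c i * X i ω) := by
  intro s
  induction s with
  | zero => simp
  | succ n ih =>
    have e : ∀ (h : ℕ → ℕ), (fun ω => ∑ i ∈ Finset.range (n+1), c i * X (h i) ω)
        = fun ω => (∑ i ∈ Finset.range n, c i * X (h i) ω) + c n * X (h n) ω := by
      intro h; funext ω; rw [Finset.sum_range_succ]
    have eid : (fun ω => ∑ i ∈ Finset.range (n+1), c i * X i ω)
        = fun ω => (∑ i ∈ Finset.range n, c i * X i ω) + c n * X n ω := by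
      funext ω; rw [Finset.sum_range_succ]
    rw [e g, eid]
    -- independence on the g side
    have hindepg : IndepFun (fun ω => ∑ i ∈ Finset.range n, c i * X (g i) ω)
        (fun ω => c n * X (g n) ω) μ := by
      have hinj : Set.InjOn g (Finset.range n) := hg.injOn
      have hd : Disjoint ((Finset.range n).image g) ({g n} : Finset ℕ) := by
        simp only [Finset.disjoint_singleton_right, Finset.mem_image, Finset.mem_range]
        rintro ⟨i, hi, hgi⟩
        exact absurd (hg hgi) (Nat.ne_of_lt hi)
      have h := indep_wsum μ X hmeas hindep (c ∘ Function.invFun g) (fun _ => c n)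
        ((Finset.range n).image g) {g n} hd
      have eq1 : (fun ω => ∑ i ∈ (Finset.range n).image g, (c ∘ Function.invFun g) i * X i ω)
          = fun ω => ∑ i ∈ Finset.range n, c i * X (g i) ω := by
        funext ω
        rw [Finset.sum_image (fun a _ b _ h => hg h)]
        refine Finset.sum_congr rfl (fun i _ => ?_)
        simp [Function.leftInverse_invFun hg i]
      have eq2 : (fun ω => ∑ i ∈ ({g n} : Finset ℕ), (fun _ => c n) i * X i ω)
          = fun ω => c n * X (g n) ω := by
        funext ω; simp
      rwa [eq1, eq2] at h
    have hindepid : IndepFun (fun ω => ∑ i ∈ Finset.range n, c i * X i ω)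
        (fun ω => c n * X n ω) μ := by
      have hd : Disjoint (Finset.range n) ({n} : Finset ℕ) := by
        simp [Finset.disjoint_singleton_right]
      have h := indep_wsum μ X hmeas hindep c (fun _ => c n) (Finset.range n) {n} hd
      have eq2 : (fun ω => ∑ i ∈ ({n} : Finset ℕ), (fun _ => c n) i * X i ω)
          = fun ω => c n * X n ω := by funext ω; simp
      rwa [eq2] at h
    have hBlaw : μ.map (fun ω => c n * X (g n) ω) = μ.map (fun ω => c n * X n ω) := by
      have e1 : (fun ω => c n * X (g n) ω) = (fun y : ℝ => c n * y) ∘ X (g n) := rfl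
      have e2 : (fun ω => c n * X n ω) = (fun y : ℝ => c n * y) ∘ X n := rfl
      rw [e1, e2, ← Measure.map_map (measurable_const_mul _) (hmeas _),
        ← Measure.map_map (measurable_const_mul _) (hmeas _), hident (g n), hident n]
    exact law_add_eq μ (wsum_meas X hmeas c _ g) ((hmeas (g n)).const_mul _)
      (wsum_meas X hmeas c _ id) ((hmeas n).const_mul _) hindepg hindepid ih hBlaw

lemma hybrid_step {Ω : Type*} [MeasurableSpace Ω] (μ : Measure Ω) [IsProbabilityMeasure μ]
    (X : ℕ → Ω → ℝ) (hmeas : ∀ i, Measurable (X i))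
    (hindep : iIndepFun X μ)
    (hident : ∀ i, μ.map (X i) = μ.map (X 0))
    (s t : ℕ) (θ η : ℕ → ℝ)
    (hdom : ∀ x : ℝ,
      μ {ω | ∑ i ∈ Finset.range s, θ i * X i ω ≤ x}
        ≤ μ {ω | ∑ j ∈ Finset.range t, η j * X j ω ≤ x})
    (k : ℕ) (π : ℕ → ℝ) (hπ : ∀ l, 0 ≤ π l) (m : ℕ) (hm : m < k) (x : ℝ) :
    μ {ω | (∑ l ∈ Finset.range m, π l * ∑ j ∈ Finset.range t, η j * X (j*k+l) ω)
         + ∑ l ∈ Finset.Ico m k, π l * ∑ i ∈ Finset.range s, θ i * X (i*k+l) ω ≤ x}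
      ≤ μ {ω | (∑ l ∈ Finset.range (m+1), π l * ∑ j ∈ Finset.range t, η j * X (j*k+l) ω)
         + ∑ l ∈ Finset.Ico (m+1) k, π l * ∑ i ∈ Finset.range s, θ i * X (i*k+l) ω ≤ x} := by
  classical
  have hk : 0 < k := lt_of_le_of_lt (Nat.zero_le m) hm
  have dec1 : ∀ l, l < k → ∀ j, (j*k+l) % k = l := fun l hl j => by
    rw [mul_comm, Nat.mul_add_mod, Nat.mod_eq_of_lt hl]
  have dec2 : ∀ l, l < k → ∀ j, (j*k+l) / k = j := fun l hl j => by
    rw [mul_comm, Nat.mul_add_div hk, Nat.div_eq_of_lt hl, add_zero]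
  set W : Ω → ℝ := fun ω =>
      (∑ l ∈ Finset.range m, π l * ∑ j ∈ Finset.range t, η j * X (j*k+l) ω)
      + ∑ l ∈ Finset.Ico (m+1) k, π l * ∑ i ∈ Finset.range s, θ i * X (i*k+l) ω with hW
  set U : Ω → ℝ := fun ω => π m * ∑ i ∈ Finset.range s, θ i * X (i*k+m) ω with hU
  set U' : Ω → ℝ := fun ω => π m * ∑ j ∈ Finset.range t, η j * X (j*k+m) ω with hU'
  -- measurability
  have measInner : ∀ (c : ℕ → ℝ) (A : Finset ℕ) (l : ℕ),
      Measurable (fun ω => ∑ i ∈ A, c i * X (i*k+l) ω) := fun c A l =>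
    Finset.measurable_sum _ (fun i _ => (hmeas _).const_mul _)
  have measU : Measurable U := (measInner θ _ m).const_mul _
  have measU' : Measurable U' := (measInner η _ m).const_mul _
  have measW : Measurable W := by
    apply Measurable.add <;>
      exact Finset.measurable_sum _ (fun l _ => (measInner _ _ l).const_mul _)
  -- flattened index sets
  set e : ℕ × ℕ → ℕ := fun p => p.2*k+p.1 with he
  set T1 : Finset ℕ := ((Finset.range m) ×ˢ (Finset.range t)).image e with hT1
  set T2 : Finset ℕ := ((Finset.Ico (m+1) k) ×ˢ (Finset.range s)).image e with hT2
  set S1 : Finset ℕ := (Finset.range s).image (fun i => i*k+m) with hS1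
  set S2 : Finset ℕ := (Finset.range t).image (fun j => j*k+m) with hS2
  set b : ℕ → ℝ := fun n => π (n % k) * (if n % k < m then η (n / k) else θ (n / k)) with hb
  set aθ : ℕ → ℝ := fun n => π (n % k) * θ (n / k) with haθ
  set aη : ℕ → ℝ := fun n => π (n % k) * η (n / k) with haη
  have memT1 : ∀ n ∈ T1, n % k < m := by
    intro n hn
    simp only [hT1, Finset.mem_image, Finset.mem_product, Finset.mem_range] at hn
    obtain ⟨p, ⟨hp1, _⟩, rfl⟩ := hn
    rw [he, dec1 p.1 (lt_trans hp1 hm) p.2]; exact hp1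
  have memT2 : ∀ n ∈ T2, m + 1 ≤ n % k ∧ n % k < k := by
    intro n hn
    simp only [hT2, Finset.mem_image, Finset.mem_product, Finset.mem_Ico, Finset.mem_range] at hn
    obtain ⟨p, ⟨hp1, _⟩, rfl⟩ := hn
    rw [he, dec1 p.1 hp1.2 p.2]; exact hp1
  have memS1 : ∀ n ∈ S1, n % k = m := by
    intro n hn
    simp only [hS1, Finset.mem_image, Finset.mem_range] at hn
    obtain ⟨i, _, rfl⟩ := hn
    exact dec1 m hm i
  have memS2 : ∀ n ∈ S2, n % k = m := by
    intro n hn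
    simp only [hS2, Finset.mem_image, Finset.mem_range] at hn
    obtain ⟨i, _, rfl⟩ := hn
    exact dec1 m hm i
  have hdisjT : Disjoint T1 T2 := by
    rw [Finset.disjoint_left]
    intro n h1 h2
    have := memT1 n h1; have := memT2 n h2; omega
  have hdisjS1T : Disjoint S1 (T1 ∪ T2) := by
    rw [Finset.disjoint_left]
    intro n h1 h2
    have := memS1 n h1
    rcases Finset.mem_union.mp h2 with h | h
    · have := memT1 n h; omega
    · have := memT2 n h; omega
  have hdisjS2T : Disjoint S2 (T1 ∪ T2) := by
    rw [Finset.disjoint_left]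
    intro n h1 h2
    have := memS2 n h1
    rcases Finset.mem_union.mp h2 with h | h
    · have := memT1 n h; omega
    · have := memT2 n h; omega
  -- injectivity of e on products with first coordinate < k
  have hinjE : ∀ (A B : Finset ℕ), (∀ l ∈ A, l < k) →
      ∀ p ∈ A ×ˢ B, ∀ q ∈ A ×ˢ B, e p = e q → p = q := by
    intro A B hA p hp q hq h
    rw [Finset.mem_product] at hp hq
    have h1 : (e p) % k = (e q) % k := by rw [h]
    have h2 : (e p) / k = (e q) / k := by rw [h]
    rw [he] at h1 h2
    simp only at h1 h2
    rw [dec1 p.1 (hA _ hp.1) p.2, dec1 q.1 (hA _ hq.1) q.2] at h1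
    rw [dec2 p.1 (hA _ hp.1) p.2, dec2 q.1 (hA _ hq.1) q.2] at h2
    exact Prod.ext h1 h2
  have hinjS : ∀ (c : ℕ), ∀ p ∈ Finset.range c, ∀ q ∈ Finset.range c,
      p*k+m = q*k+m → p = q := by
    intro c p _ q _ h
    have := Nat.add_right_cancel h
    exact Nat.eq_of_mul_eq_mul_right hk this
  -- flattening identities
  have hWeq : (fun ω => ∑ n ∈ T1 ∪ T2, b n * X n ω) = W := by
    funext ω
    rw [Finset.sum_union hdisjT, hW]
    congr 1
    · rw [hT1, Finset.sum_image (hinjE _ _ (fun l hl => lt_trans (Finset.mem_range.mp hl) hm)),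
        Finset.sum_product]
      refine Finset.sum_congr rfl fun l hl => ?_
      rw [Finset.mem_range] at hl
      rw [Finset.mul_sum]
      refine Finset.sum_congr rfl fun j _ => ?_
      rw [hb, he]
      simp only
      rw [dec1 l (lt_trans hl hm) j, dec2 l (lt_trans hl hm) j, if_pos hl, mul_assoc]
    · rw [hT2, Finset.sum_image (hinjE _ _ (fun l hl => (Finset.mem_Ico.mp hl).2)),
        Finset.sum_product]
      refine Finset.sum_congr rfl fun l hl => ?_
      rw [Finset.mem_Ico] at hl
      rw [Finset.mul_sum]
      refine Finset.sum_congr rfl fun i _ => ?_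
      rw [hb, he]
      simp only
      rw [dec1 l hl.2 i, dec2 l hl.2 i, if_neg (by omega), mul_assoc]
  have hUeq : (fun ω => ∑ n ∈ S1, aθ n * X n ω) = U := by
    funext ω
    rw [hS1, Finset.sum_image (hinjS s), hU]
    simp only
    rw [Finset.mul_sum]
    refine Finset.sum_congr rfl fun i _ => ?_
    rw [haθ]
    simp only
    rw [dec1 m hm i, dec2 m hm i, mul_assoc]
  have hU'eq : (fun ω => ∑ n ∈ S2, aη n * X n ω) = U' := by
    funext ω
    rw [hS2, Finset.sum_image (hinjS t), hU']
    simp only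
    rw [Finset.mul_sum]
    refine Finset.sum_congr rfl fun j _ => ?_
    rw [haη]
    simp only
    rw [dec1 m hm j, dec2 m hm j, mul_assoc]
  -- independence
  have hUW : IndepFun U W μ := by
    have h := indep_wsum μ X hmeas hindep aθ b S1 (T1 ∪ T2) hdisjS1T
    rwa [hUeq, hWeq] at h
  have hU'W : IndepFun U' W μ := by
    have h := indep_wsum μ X hmeas hindep aη b S2 (T1 ∪ T2) hdisjS2T
    rwa [hU'eq, hWeq] at h
  -- CDF comparison
  have hgθ : Function.Injective (fun i : ℕ => i*k+m) := by
    intro p q h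
    simp only at h
    exact Nat.eq_of_mul_eq_mul_right hk (Nat.add_right_cancel h)
  have hcdf : ∀ y : ℝ, μ {ω | U ω ≤ y} ≤ μ {ω | U' ω ≤ y} := by
    intro y
    rcases (hπ m).eq_or_lt with hz | hpos
    · simp only [hU, hU', ← hz, zero_mul]
      exact le_refl _
    · have hsetU : {ω | U ω ≤ y}
          = (fun ω => ∑ i ∈ Finset.range s, θ i * X (i*k+m) ω) ⁻¹' Set.Iic (y / π m) := by
        ext ω
        simp only [hU, Set.mem_setOf_eq, Set.mem_preimage, Set.mem_Iic]
        rw [mul_comm, ← le_div_iff₀ hpos]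
      have hsetU' : {ω | U' ω ≤ y}
          = (fun ω => ∑ j ∈ Finset.range t, η j * X (j*k+m) ω) ⁻¹' Set.Iic (y / π m) := by
        ext ω
        simp only [hU', Set.mem_setOf_eq, Set.mem_preimage, Set.mem_Iic]
        rw [mul_comm, ← le_div_iff₀ hpos]
      rw [hsetU, hsetU']
      rw [← Measure.map_apply (measInner θ _ m) measurableSet_Iic,
        ← Measure.map_apply (measInner η _ m) measurableSet_Iic,
        map_wsum_reindex μ X hmeas hindep hident θ (fun i => i*k+m) hgθ s,
        map_wsum_reindex μ X hmeas hindep hident η (fun j => j*k+m) hgθ t,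
        Measure.map_apply (Finset.measurable_sum _ (fun i _ => (hmeas i).const_mul _)) measurableSet_Iic,
        Measure.map_apply (Finset.measurable_sum _ (fun j _ => (hmeas j).const_mul _)) measurableSet_Iic]
      exact hdom (y / π m)
  -- rewrite the goal
  have g1 : {ω | (∑ l ∈ Finset.range m, π l * ∑ j ∈ Finset.range t, η j * X (j*k+l) ω)
         + ∑ l ∈ Finset.Ico m k, π l * ∑ i ∈ Finset.range s, θ i * X (i*k+l) ω ≤ x}
      = {ω | U ω + W ω ≤ x} := by
    ext ω
    simp only [Set.mem_setOf_eq, hU, hW]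
    rw [Finset.sum_eq_sum_Ico_succ_bot hm
      (fun l => π l * ∑ i ∈ Finset.range s, θ i * X (i*k+l) ω)]
    constructor <;> intro h <;> linarith
  have g2 : {ω | (∑ l ∈ Finset.range (m+1), π l * ∑ j ∈ Finset.range t, η j * X (j*k+l) ω)
         + ∑ l ∈ Finset.Ico (m+1) k, π l * ∑ i ∈ Finset.range s, θ i * X (i*k+l) ω ≤ x}
      = {ω | U' ω + W ω ≤ x} := by
    ext ω
    simp only [Set.mem_setOf_eq, hU', hW]
    rw [Finset.sum_range_succ]
    constructor <;> intro h <;> linarith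
  rw [g1, g2]
  exact cdf_add_le μ measU measU' measW hUW hU'W hcdf x


/-- If `Σᵢ θᵢ Xᵢ ≥_st Σⱼ ηⱼ Xⱼ` for i.i.d. variables, then for every
nonnegative vector `π ∈ ℝ^k`, the Kronecker products satisfy
`Σ (θ ⊗ π)ᵢ Xᵢ ≥_st Σ (η ⊗ π)ⱼ Xⱼ`. -/
theorem kronecker_stochDom {Ω : Type*} [MeasurableSpace Ω]
    (μ : Measure Ω) [IsProbabilityMeasure μ]
    (X : ℕ → Ω → ℝ) (hmeas : ∀ i, Measurable (X i))
    (hindep : iIndepFun X μ)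
    (hident : ∀ i, μ.map (X i) = μ.map (X 0))
    (s t : ℕ) (θ η : ℕ → ℝ)
    (hdom : ∀ x : ℝ,
      μ {ω | ∑ i ∈ Finset.range s, θ i * X i ω ≤ x}
        ≤ μ {ω | ∑ j ∈ Finset.range t, η j * X j ω ≤ x})
    (k : ℕ) (π : ℕ → ℝ) (hπ : ∀ l, 0 ≤ π l) :
    ∀ x : ℝ,
      μ {ω | ∑ i ∈ Finset.range s, ∑ l ∈ Finset.range k, θ i * π l * X (i * k + l) ω ≤ x}
        ≤ μ {ω | ∑ j ∈ Finset.range t, ∑ l ∈ Finset.range k, η j * π l * X (j * k + l) ω ≤ x} := by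
  intro x
  rcases Nat.eq_zero_or_pos k with hk0 | hk
  · subst hk0
    simp
  · have swap : ∀ (c : ℕ → ℝ) (A : Finset ℕ) (ω : Ω),
        (∑ i ∈ A, ∑ l ∈ Finset.range k, c i * π l * X (i * k + l) ω)
          = ∑ l ∈ Finset.range k, π l * ∑ i ∈ A, c i * X (i * k + l) ω := by
      intro c A ω
      rw [Finset.sum_comm]
      refine Finset.sum_congr rfl fun l _ => ?_
      rw [Finset.mul_sum]
      exact Finset.sum_congr rfl fun i _ => by ring
    have gL : {ω | ∑ i ∈ Finset.range s, ∑ l ∈ Finset.range k, θ i * π l * X (i * k + l) ω ≤ x}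
        = {ω | (∑ l ∈ Finset.range 0, π l * ∑ j ∈ Finset.range t, η j * X (j*k+l) ω)
             + ∑ l ∈ Finset.Ico 0 k, π l * ∑ i ∈ Finset.range s, θ i * X (i*k+l) ω ≤ x} := by
      ext ω
      simp only [Set.mem_setOf_eq, Finset.range_zero, Finset.sum_empty, zero_add]
      rw [swap θ _ ω, ← Finset.range_eq_Ico]
    have gR : {ω | ∑ j ∈ Finset.range t, ∑ l ∈ Finset.range k, η j * π l * X (j * k + l) ω ≤ x}
        = {ω | (∑ l ∈ Finset.range k, π l * ∑ j ∈ Finset.range t, η j * X (j*k+l) ω)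
             + ∑ l ∈ Finset.Ico k k, π l * ∑ i ∈ Finset.range s, θ i * X (i*k+l) ω ≤ x} := by
      ext ω
      simp only [Set.mem_setOf_eq, Finset.Ico_self, Finset.sum_empty, add_zero]
      rw [swap η _ ω]
    rw [gL, gR]
    have chain : ∀ m, m ≤ k →
        μ {ω | (∑ l ∈ Finset.range 0, π l * ∑ j ∈ Finset.range t, η j * X (j*k+l) ω)
             + ∑ l ∈ Finset.Ico 0 k, π l * ∑ i ∈ Finset.range s, θ i * X (i*k+l) ω ≤ x}
          ≤ μ {ω | (∑ l ∈ Finset.range m, π l * ∑ j ∈ Finset.range t, η j * X (j*k+l) ω)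
             + ∑ l ∈ Finset.Ico m k, π l * ∑ i ∈ Finset.range s, θ i * X (i*k+l) ω ≤ x} := by
      intro m
      induction m with
      | zero => intro _; exact le_refl _
      | succ n ih =>
        intro h
        exact le_trans (ih (Nat.le_of_succ_le h))
          (hybrid_step μ X hmeas hindep hident s t θ η hdom k π hπ n (Nat.lt_of_succ_le h) x)
    exact chain k le_rfl
end

section
/- Let F be a cumulative distribution function with F(0) = 0 such that H(x) = 1 − F(1/x) is concave on (0,∞). Then F belongs to class 𝓛: for all 0 ≤ y ≤ x, the function V(z) = F(x + yz) + F(x + y/z) is nonincreasing in z ∈ (0,1]. -/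
open Filter

lemma key_convex_ineq {g : ℝ → ℝ} {s : Set ℝ} (hg : ConvexOn ℝ s g)
    {v₁ v₂ u₂ u₁ : ℝ} (h1 : v₁ ∈ s) (h2 : v₂ ∈ s) (h3 : u₂ ∈ s) (h4 : u₁ ∈ s)
    (hv : v₁ < v₂) (hvu : v₂ ≤ u₂) (hu : u₂ < u₁)
    (hlen : u₁ - u₂ ≤ v₂ - v₁) (hgm : g v₂ ≤ g v₁) :
    g u₂ + g v₂ ≤ g u₁ + g v₁ := by
  have hvu₁ : v₂ < u₁ := lt_of_le_of_lt hvu hu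
  have hA : (g v₁ - g v₂) / (v₁ - v₂) ≤ (g u₁ - g v₂) / (u₁ - v₂) :=
    hg.secant_mono h2 h1 h4 hv.ne hvu₁.ne' (hv.le.trans hvu₁.le)
  have hB : (g v₂ - g u₁) / (v₂ - u₁) ≤ (g u₂ - g u₁) / (u₂ - u₁) :=
    hg.secant_mono h4 h2 h3 hvu₁.ne hu.ne hvu
  have e1 : (g v₁ - g v₂) / (v₁ - v₂) = (g v₂ - g v₁) / (v₂ - v₁) := by
    rw [← neg_div_neg_eq]; ring_nf
  have e2 : (g v₂ - g u₁) / (v₂ - u₁) = (g u₁ - g v₂) / (u₁ - v₂) := by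
    rw [← neg_div_neg_eq]; ring_nf
  have e3 : (g u₂ - g u₁) / (u₂ - u₁) = (g u₁ - g u₂) / (u₁ - u₂) := by
    rw [← neg_div_neg_eq]; ring_nf
  rw [e1] at hA
  rw [e2, e3] at hB
  set s₁ := (g v₂ - g v₁) / (v₂ - v₁) with hs₁
  set s₂ := (g u₁ - g u₂) / (u₁ - u₂) with hs₂
  have hslope : s₁ ≤ s₂ := hA.trans hB
  have hd1 : (0:ℝ) < v₂ - v₁ := by linarith
  have hd2 : (0:ℝ) < u₁ - u₂ := by linarith
  have hs₁neg : s₁ ≤ 0 := div_nonpos_of_nonpos_of_nonneg (by linarith) hd1.le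
  have hgv : g v₂ - g v₁ = s₁ * (v₂ - v₁) := by rw [hs₁, div_mul_cancel₀ _ hd1.ne']
  have hgu : g u₁ - g u₂ = s₂ * (u₁ - u₂) := by rw [hs₂, div_mul_cancel₀ _ hd2.ne']
  rcases le_or_gt 0 s₂ with h | h
  · nlinarith
  · nlinarith

/-- Four-point inequality: if `F ∘ (1/·)` is convex on `(0,∞)`, `F` is monotone,
`0 < a₁ < a₂ ≤ b₂ < b₁` and `1/a₁ - 1/a₂ ≤ 1/b₂ - 1/b₁`, then
`F a₂ + F b₂ ≤ F a₁ + F b₁`. -/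
lemma four_point {F : ℝ → ℝ} (hmono : Monotone F)
    (hconv : ConvexOn ℝ (Set.Ioi 0) (fun t => F (1 / t)))
    {a₁ a₂ b₂ b₁ : ℝ} (ha₁ : 0 < a₁) (h12 : a₁ < a₂) (h2b : a₂ ≤ b₂) (hbb : b₂ < b₁)
    (hlen : 1 / a₁ - 1 / a₂ ≤ 1 / b₂ - 1 / b₁) :
    F a₂ + F b₂ ≤ F a₁ + F b₁ := by
  have ha₂ : 0 < a₂ := ha₁.trans h12
  have hb₂ : 0 < b₂ := lt_of_lt_of_le ha₂ h2b
  have hb₁ : 0 < b₁ := hb₂.trans hbb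
  have hv12 : 1 / b₁ < 1 / b₂ := one_div_lt_one_div_of_lt hb₂ hbb
  have hv2u2 : 1 / b₂ ≤ 1 / a₂ := one_div_le_one_div_of_le ha₂ h2b
  have hu21 : 1 / a₂ < 1 / a₁ := one_div_lt_one_div_of_lt ha₁ h12
  have hkey := key_convex_ineq hconv (v₁ := 1 / b₁) (v₂ := 1 / b₂)
    (u₂ := 1 / a₂) (u₁ := 1 / a₁)
    (by simpa using hb₁) (by simpa using hb₂) (by simpa using ha₂) (by simpa using ha₁)
    hv12 hv2u2 hu21 hlen
    (by simpa [one_div_one_div] using hmono hbb.le)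
  simpa [one_div_one_div] using hkey

/-- If `F` is a CDF with `F 0 = 0` such that `H x = 1 − F (1/x)` is concave on
`(0, ∞)`, then `F` is of class `𝓛`: for all `0 ≤ y ≤ x`, the function
`z ↦ F (x + y z) + F (x + y / z)` is nonincreasing on `(0, 1]`. -/
theorem concaveInverted_mem_classL (F : ℝ → ℝ)
    (hmono : Monotone F)
    (hrc : ∀ x, ContinuousWithinAt F (Set.Ici x) x)
    (hbot : Tendsto F atBot (nhds 0))
    (htop : Tendsto F atTop (nhds 1))
    (hF0 : F 0 = 0)
    (hconc : ConcaveOn ℝ (Set.Ioi 0) (fun x => 1 - F (1 / x))) :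
    ∀ x y : ℝ, 0 ≤ y → y ≤ x →
      AntitoneOn (fun z => F (x + y * z) + F (x + y / z)) (Set.Ioc 0 1) := by
  intro x y hy hyx z hz w hw hzw
  obtain ⟨hz0, hz1⟩ := hz
  obtain ⟨hw0, hw1⟩ := hw
  show F (x + y * w) + F (x + y / w) ≤ F (x + y * z) + F (x + y / z)
  rcases eq_or_lt_of_le hy with hy0 | hy0
  · simp only [← hy0, zero_mul, zero_div, le_refl]
  rcases eq_or_lt_of_le hzw with rfl | hzw
  · exact le_refl _
  have hx0 : 0 < x := lt_of_lt_of_le hy0 hyx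
  have hconv : ConvexOn ℝ (Set.Ioi 0) (fun t => F (1 / t)) := by
    have h := (hconc.neg).add_const 1
    refine cast (congrArg (ConvexOn ℝ (Set.Ioi 0)) ?_) h
    funext t
    simp only [Pi.neg_apply, Pi.add_apply]
    ring
  -- positivity facts
  have ha₁0 : 0 < x + y * z := by positivity
  have ha₂0 : 0 < x + y * w := by positivity
  have hc₁0 : 0 < z * x + y := by positivity
  have hc₂0 : 0 < w * x + y := by positivity
  -- rewrite the "b" points
  have hb₁ : x + y / z = (z * x + y) / z := by field_simp
  have hb₂ : x + y / w = (w * x + y) / w := by field_simp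
  apply four_point hmono hconv ha₁0
  · nlinarith
  · rw [hb₂, le_div_iff₀ hw0]
    nlinarith [mul_nonneg hy0.le (mul_nonneg hw0.le (sub_nonneg.mpr hw1)),
      mul_nonneg hy0.le (sub_nonneg.mpr hw1)]
  · rw [hb₁, hb₂, div_lt_div_iff₀ hw0 hz0]
    nlinarith
  · rw [hb₁, hb₂, one_div_div, one_div_div]
    have e1 : 1 / (x + y * z) - 1 / (x + y * w) =
        (y * (w - z)) / ((x + y * z) * (x + y * w)) := by
      rw [div_sub_div _ _ ha₁0.ne' ha₂0.ne']
      congr 1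
      ring
    have e2 : w / (w * x + y) - z / (z * x + y) =
        (y * (w - z)) / ((z * x + y) * (w * x + y)) := by
      rw [div_sub_div _ _ hc₂0.ne' hc₁0.ne', mul_comm (w * x + y) (z * x + y)]
      congr 1
      ring
    rw [e1, e2]
    have hnum : 0 ≤ y * (w - z) := by nlinarith
    have hden : (z * x + y) * (w * x + y) ≤ (x + y * z) * (x + y * w) := by
      have h1 : z * x + y ≤ x + y * z := by nlinarith
      have h2 : w * x + y ≤ x + y * w := by nlinarith
      exact mul_le_mul h1 h2 hc₂0.le ha₁0.le
    exact div_le_div_of_nonneg_left hnum (by positivity) hden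
end

section
/- Let F be a CDF in class 𝓛 (i.e., F(0)=0 and for all 0 ≤ y ≤ x, z ↦ F(x+yz) + F(x+y/z) is nonincreasing on (0,1]), and let X₁, X₂ be i.i.d. with CDF F. If 0 ≤ η ≤ θ ≤ 1/2, then θX₁ + (1−θ)X₂ ≥_st ηX₁ + (1−η)X₂. -/
open MeasureTheory ProbabilityTheory Set Filter Topology

namespace ClassLAux

variable {ν : Measure ℝ}

lemma toReal_Iic_le_one [IsProbabilityMeasure ν] (s : ℝ) : (ν (Iic s)).toReal ≤ 1 := by
  have h := prob_le_one (μ := ν) (s := Iic s)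
  have := ENNReal.toReal_mono ENNReal.one_ne_top h
  simpa using this

lemma toReal_Ioc [IsProbabilityMeasure ν] {a b : ℝ} (hab : a ≤ b) :
    (ν (Ioc a b)).toReal = (ν (Iic b)).toReal - (ν (Iic a)).toReal := by
  have hu : Iic a ∪ Ioc a b = Iic b := Iic_union_Ioc_eq_Iic hab
  have hd : Disjoint (Iic a) (Ioc a b) := Iic_disjoint_Ioc le_rfl
  have h := measure_union (μ := ν) hd measurableSet_Ioc
  rw [hu] at h
  have h2 := congrArg ENNReal.toReal h
  rw [ENNReal.toReal_add (measure_ne_top _ _) (measure_ne_top _ _)] at h2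
  linarith

lemma toReal_Ioi [IsProbabilityMeasure ν] (a : ℝ) :
    (ν (Ioi a)).toReal = 1 - (ν (Iic a)).toReal := by
  have hu : Iic a ∪ Ioi a = univ := Iic_union_Ioi
  have hd : Disjoint (Iic a) (Ioi a) := Iic_disjoint_Ioi le_rfl
  have h := measure_union (μ := ν) hd measurableSet_Ioi
  rw [hu, measure_univ] at h
  have h2 := congrArg ENNReal.toReal h
  rw [ENNReal.toReal_add (measure_ne_top _ _) (measure_ne_top _ _)] at h2
  simp at h2
  linarith

lemma key_pos [IsProbabilityMeasure ν] (F : ℝ → ℝ) (hF : ∀ x, F x = (ν (Iic x)).toReal)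
    (hL : ∀ x y : ℝ, 0 ≤ y → y ≤ x →
      AntitoneOn (fun z => F (x + y * z) + F (x + y / z)) (Ioc 0 1))
    {t θ η v : ℝ} (hη : 0 < η) (hηθ : η ≤ θ) (hθ : θ ≤ 1/2) (hv0 : 0 ≤ v) (hvt : v ≤ t) :
    ν (Ioc ((t - η*v)/(1-η)) ((t - θ*v)/(1-θ)))
      ≤ ν (Ioc ((t - (1-θ)*v)/θ) ((t - (1-η)*v)/η)) := by
  have hθ0 : 0 < θ := lt_of_lt_of_le hη hηθ
  have h1θ : (0:ℝ) < 1 - θ := by linarith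
  have h1η : (0:ℝ) < 1 - η := by linarith
  have hprod : (0:ℝ) ≤ (θ - η) * (t - v) :=
    mul_nonneg (by linarith) (by linarith)
  -- identifications
  have hBθ : (t - θ*v)/(1-θ) = t + (t - v) * (θ/(1-θ)) := by field_simp; ring
  have hBη : (t - η*v)/(1-η) = t + (t - v) * (η/(1-η)) := by field_simp; ring
  have hAθ : (t - (1-θ)*v)/θ = t + (t - v) / (θ/(1-θ)) := by
    rw [div_div_eq_mul_div]; field_simp; ring
  have hAη : (t - (1-η)*v)/η = t + (t - v) / (η/(1-η)) := by
    rw [div_div_eq_mul_div]; field_simp; ring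
  have hz₁ : η/(1-η) ∈ Ioc (0:ℝ) 1 :=
    ⟨div_pos hη h1η, (div_le_one h1η).mpr (by linarith)⟩
  have hz₂ : θ/(1-θ) ∈ Ioc (0:ℝ) 1 :=
    ⟨div_pos hθ0 h1θ, (div_le_one h1θ).mpr (by linarith)⟩
  have hz12 : η/(1-η) ≤ θ/(1-θ) := by
    rw [div_le_div_iff₀ h1η h1θ]; nlinarith
  have hmono := hL t (t - v) (by linarith) (by linarith) hz₁ hz₂ hz12
  simp only at hmono
  rw [← hBθ, ← hBη, ← hAθ, ← hAη] at hmono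
  have hBB : (t - η*v)/(1-η) ≤ (t - θ*v)/(1-θ) := by
    rw [div_le_div_iff₀ h1η h1θ]; nlinarith
  have hAA : (t - (1-θ)*v)/θ ≤ (t - (1-η)*v)/η := by
    rw [div_le_div_iff₀ hθ0 hη]; nlinarith
  refine (ENNReal.toReal_le_toReal (measure_ne_top _ _) (measure_ne_top _ _)).mp ?_
  rw [toReal_Ioc hBB, toReal_Ioc hAA]
  have e1 := hF ((t - θ*v)/(1-θ))
  have e2 := hF ((t - η*v)/(1-η))
  have e3 := hF ((t - (1-θ)*v)/θ)
  have e4 := hF ((t - (1-η)*v)/η)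
  linarith

lemma key_zero [IsProbabilityMeasure ν] (F : ℝ → ℝ) (hF : ∀ x, F x = (ν (Iic x)).toReal)
    (hL : ∀ x y : ℝ, 0 ≤ y → y ≤ x →
      AntitoneOn (fun z => F (x + y * z) + F (x + y / z)) (Ioc 0 1))
    {t θ v : ℝ} (hθ0 : 0 < θ) (hθ : θ ≤ 1/2) (hv0 : 0 ≤ v) (hvt : v ≤ t) :
    ν (Ioc t ((t - θ*v)/(1-θ))) ≤ ν (Ioi ((t - (1-θ)*v)/θ)) := by
  have h1θ : (0:ℝ) < 1 - θ := by linarith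
  have hBθ : (t - θ*v)/(1-θ) = t + (t - v) * (θ/(1-θ)) := by field_simp; ring
  have hAθ : (t - (1-θ)*v)/θ = t + (t - v) / (θ/(1-θ)) := by
    rw [div_div_eq_mul_div]; field_simp; ring
  have hz₂ : θ/(1-θ) ∈ Ioc (0:ℝ) 1 :=
    ⟨div_pos hθ0 h1θ, (div_le_one h1θ).mpr (by linarith)⟩
  have htB : t ≤ (t - θ*v)/(1-θ) := by
    rw [le_div_iff₀ h1θ]; nlinarith
  -- main real inequality : F Bθ + F Aθ ≤ 1 + F t
  have hmain : F ((t - θ*v)/(1-θ)) + F ((t - (1-θ)*v)/θ) ≤ 1 + F t := by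
    rcases eq_or_lt_of_le (sub_nonneg.mpr hvt) with hy | hy
    · -- v = t
      have hv : v = t := by linarith [hy]
      have hB : (t - θ*v)/(1-θ) = t := by rw [hv]; field_simp
      have hA : (t - (1-θ)*v)/θ = t := by rw [hv]; field_simp; ring
      rw [hB, hA, hF t]
      have := toReal_Iic_le_one (ν := ν) t
      linarith
    · set y : ℝ := t - v with hy'
      set z₂ : ℝ := θ/(1-θ) with hz2'
      have hz₂pos : 0 < z₂ := hz₂.1
      have hbound : ∀ n : ℕ, F ((t - θ*v)/(1-θ)) + F ((t - (1-θ)*v)/θ)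
          ≤ F (t + y * (z₂ / (n+1))) + 1 := by
        intro n
        have hn1 : (0:ℝ) < (n:ℝ) + 1 := by positivity
        have hle : z₂ / ((n:ℝ)+1) ≤ z₂ :=
          div_le_self (le_of_lt hz₂pos) (by linarith)
        have hzn : z₂ / ((n:ℝ)+1) ∈ Ioc (0:ℝ) 1 :=
          ⟨by positivity, le_trans hle hz₂.2⟩
        have hmono := hL t y (by linarith) (by linarith) hzn hz₂ hle
        simp only at hmono
        rw [← hBθ, ← hAθ] at hmono
        have hFle : F (t + y / (z₂ / ((n:ℝ)+1))) ≤ 1 := by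
          rw [hF]; exact toReal_Iic_le_one _
        linarith
      -- limit
      have hptlim : Tendsto (fun n : ℕ => t + y * (z₂ / ((n:ℝ)+1))) atTop (𝓝 t) := by
        have h0 : Tendsto (fun n : ℕ => z₂ * (1/((n:ℝ)+1))) atTop (𝓝 0) := by
          simpa using tendsto_one_div_add_atTop_nhds_zero_nat.const_mul z₂
        have : Tendsto (fun n : ℕ => t + y * (z₂ * (1/((n:ℝ)+1)))) atTop (𝓝 (t + y * 0)) :=
          (h0.const_mul y).const_add t
        simpa [div_eq_mul_inv, mul_comm, mul_assoc, mul_left_comm] using this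
      have hset : (⋂ n : ℕ, Iic (t + y * (z₂ / ((n:ℝ)+1)))) = Iic t := by
        ext s
        simp only [mem_iInter, mem_Iic]
        constructor
        · intro h
          exact ge_of_tendsto hptlim (Eventually.of_forall h)
        · intro h n
          have : 0 ≤ y * (z₂ / ((n:ℝ)+1)) := by positivity
          linarith
      have hmeas : Tendsto (fun n : ℕ => ν (Iic (t + y * (z₂ / ((n:ℝ)+1))))) atTop
          (𝓝 (ν (Iic t))) := by
        have := tendsto_measure_iInter_atTop (μ := ν)
          (s := fun n : ℕ => Iic (t + y * (z₂ / ((n:ℝ)+1))))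
          (fun n => measurableSet_Iic.nullMeasurableSet)
          (fun m n hmn => by
            apply Iic_subset_Iic.mpr
            have hc : ((m:ℝ)+1) ≤ ((n:ℝ)+1) := by
              have := (Nat.cast_le (α := ℝ)).mpr hmn; linarith
            have : z₂ / ((n:ℝ)+1) ≤ z₂ / ((m:ℝ)+1) := by gcongr
            nlinarith)
          ⟨0, measure_ne_top _ _⟩
        rw [hset] at this
        exact this
      have hFt : Tendsto (fun n : ℕ => F (t + y * (z₂ / ((n:ℝ)+1)))) atTop (𝓝 (F t)) := by
        have := (ENNReal.tendsto_toReal (measure_ne_top ν (Iic t))).comp hmeas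
        convert this using 2 with n
        · exact hF _
        · exact hF t
      have hlim : Tendsto (fun n : ℕ => F (t + y * (z₂ / ((n:ℝ)+1))) + 1) atTop
          (𝓝 (F t + 1)) := hFt.add tendsto_const_nhds
      have := ge_of_tendsto hlim (Eventually.of_forall hbound)
      linarith
  refine (ENNReal.toReal_le_toReal (measure_ne_top _ _) (measure_ne_top _ _)).mp ?_
  rw [toReal_Ioc htB, toReal_Ioi]
  have e1 := hF ((t - θ*v)/(1-θ))
  have e3 := hF ((t - (1-θ)*v)/θ)
  have e5 := hF t
  linarith

end ClassLAux

namespace ClassLAux2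

variable {ν : Measure ℝ}

lemma sliceI_eq {t θ η v : ℝ} (hθ1 : θ < 1) (hη1 : η < 1) (hvt : v ≤ t) :
    {u : ℝ | v < u ∧ θ*v + (1-θ)*u ≤ t ∧ t < η*v + (1-η)*u}
      = Ioc ((t - η*v)/(1-η)) ((t - θ*v)/(1-θ)) := by
  have h1θ : (0:ℝ) < 1 - θ := by linarith
  have h1η : (0:ℝ) < 1 - η := by linarith
  ext u
  simp only [mem_setOf_eq, mem_Ioc]
  constructor
  · rintro ⟨h1, h2, h3⟩
    constructor
    · rw [div_lt_iff₀ h1η]; linarith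
    · rw [le_div_iff₀ h1θ]; linarith
  · rintro ⟨h1, h2⟩
    rw [div_lt_iff₀ h1η] at h1
    rw [le_div_iff₀ h1θ] at h2
    have hvu : v < u := by nlinarith
    exact ⟨hvu, by linarith, by linarith⟩

lemma sliceU_eq {t θ η v : ℝ} (hθ0 : 0 < θ) (hθ1 : θ < 1) (hη0 : 0 < η) (hvt : v ≤ t) :
    {u : ℝ | v < u ∧ η*u + (1-η)*v ≤ t ∧ t < θ*u + (1-θ)*v}
      = Ioc ((t - (1-θ)*v)/θ) ((t - (1-η)*v)/η) := by
  ext u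
  simp only [mem_setOf_eq, mem_Ioc]
  constructor
  · rintro ⟨h1, h2, h3⟩
    constructor
    · rw [div_lt_iff₀ hθ0]; linarith
    · rw [le_div_iff₀ hη0]; linarith
  · rintro ⟨h1, h2⟩
    rw [div_lt_iff₀ hθ0] at h1
    rw [le_div_iff₀ hη0] at h2
    have hvu : v < u := by nlinarith
    exact ⟨hvu, by linarith, by linarith⟩

lemma sliceU0_eq {t θ v : ℝ} (hθ0 : 0 < θ) (hvt : v ≤ t) :
    {u : ℝ | v < u ∧ 0*u + (1-0)*v ≤ t ∧ t < θ*u + (1-θ)*v}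
      = Ioi ((t - (1-θ)*v)/θ) := by
  ext u
  simp only [mem_setOf_eq, mem_Ioi]
  constructor
  · rintro ⟨h1, h2, h3⟩
    rw [div_lt_iff₀ hθ0]; linarith
  · intro h1
    rw [div_lt_iff₀ hθ0] at h1
    have hvu : v < u := by nlinarith
    exact ⟨hvu, by linarith, by linarith⟩

lemma sliceI_empty {t θ η v : ℝ} (hθ0 : 0 ≤ θ) (hθ1 : θ < 1) (hvt : t < v) :
    {u : ℝ | v < u ∧ θ*v + (1-θ)*u ≤ t ∧ t < η*v + (1-η)*u} = ∅ := by
  rw [eq_empty_iff_forall_notMem]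
  rintro u ⟨h1, h2, -⟩
  nlinarith

lemma sliceU_empty {t θ η v : ℝ} (hη0 : 0 ≤ η) (hη1 : η < 1) (hvt : t < v) :
    {u : ℝ | v < u ∧ η*u + (1-η)*v ≤ t ∧ t < θ*u + (1-θ)*v} = ∅ := by
  rw [eq_empty_iff_forall_notMem]
  rintro u ⟨h1, h2, -⟩
  nlinarith

lemma reduction [IsProbabilityMeasure ν] {t θ η : ℝ} (hη0 : 0 ≤ η) (hηθ : η ≤ θ)
    (hθ : θ ≤ 1/2) (hpos : ν (Iic (0:ℝ)) = 0)
    (hkey : ∀ v : ℝ, 0 < v →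
      ν {u | v < u ∧ θ*v + (1-θ)*u ≤ t ∧ t < η*v + (1-η)*u}
        ≤ ν {u | v < u ∧ η*u + (1-η)*v ≤ t ∧ t < θ*u + (1-θ)*v}) :
    (ν.prod ν) {p : ℝ×ℝ | θ*p.1 + (1-θ)*p.2 ≤ t}
      ≤ (ν.prod ν) {p : ℝ×ℝ | η*p.1 + (1-η)*p.2 ≤ t} := by
  have hη2 : η ≤ 1/2 := le_trans hηθ hθ
  set π : Measure (ℝ×ℝ) := ν.prod ν with hπ
  have mE : ∀ a b : ℝ, MeasurableSet {p : ℝ×ℝ | a*p.1 + b*p.2 ≤ t} := fun a b =>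
    measurableSet_le (by fun_prop) measurable_const
  have mE' : ∀ a b : ℝ, MeasurableSet {p : ℝ×ℝ | t < a*p.1 + b*p.2} := fun a b =>
    measurableSet_lt measurable_const (by fun_prop)
  have mlt : MeasurableSet {p : ℝ×ℝ | p.1 < p.2} :=
    measurableSet_lt measurable_fst measurable_snd
  set Eθ : Set (ℝ×ℝ) := {p | θ*p.1 + (1-θ)*p.2 ≤ t} with hEθ
  set Eθ' : Set (ℝ×ℝ) := {p | θ*p.2 + (1-θ)*p.1 ≤ t} with hEθ'
  set Eη : Set (ℝ×ℝ) := {p | η*p.1 + (1-η)*p.2 ≤ t} with hEη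
  set Eη' : Set (ℝ×ℝ) := {p | η*p.2 + (1-η)*p.1 ≤ t} with hEη'
  set DI : Set (ℝ×ℝ) := {p | p.1 < p.2 ∧ θ*p.1 + (1-θ)*p.2 ≤ t ∧ t < η*p.1 + (1-η)*p.2}
    with hDI
  set DU : Set (ℝ×ℝ) := {p | p.1 < p.2 ∧ η*p.2 + (1-η)*p.1 ≤ t ∧ t < θ*p.2 + (1-θ)*p.1}
    with hDU
  have mDI : MeasurableSet DI := by
    rw [hDI]
    have : {p : ℝ×ℝ | p.1 < p.2 ∧ θ*p.1 + (1-θ)*p.2 ≤ t ∧ t < η*p.1 + (1-η)*p.2}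
        = {p : ℝ×ℝ | p.1 < p.2} ∩ ({p : ℝ×ℝ | θ*p.1 + (1-θ)*p.2 ≤ t}
          ∩ {p : ℝ×ℝ | t < η*p.1 + (1-η)*p.2}) := by ext p; simp [and_assoc]
    rw [this]
    exact mlt.inter ((mE θ (1-θ)).inter (mE' η (1-η)))
  have mDU : MeasurableSet DU := by
    rw [hDU]
    have : {p : ℝ×ℝ | p.1 < p.2 ∧ η*p.2 + (1-η)*p.1 ≤ t ∧ t < θ*p.2 + (1-θ)*p.1}
        = {p : ℝ×ℝ | p.1 < p.2} ∩ ({p : ℝ×ℝ | (1-η)*p.1 + η*p.2 ≤ t}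
          ∩ {p : ℝ×ℝ | t < (1-θ)*p.1 + θ*p.2}) := by
      ext p; simp only [mem_setOf_eq, mem_inter_iff, and_assoc]
      constructor <;> rintro ⟨h1, h2, h3⟩ <;> exact ⟨h1, by linarith, by linarith⟩
    rw [this]
    exact mlt.inter ((mE (1-η) η).inter (mE' (1-θ) θ))
  -- swap invariance
  have hswap : ∀ S : Set (ℝ×ℝ), MeasurableSet S → π (Prod.swap ⁻¹' S) = π S := by
    intro S hS
    calc π (Prod.swap ⁻¹' S) = (π.map Prod.swap) S :=
          (Measure.map_apply measurable_swap hS).symm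
      _ = π S := by rw [hπ, Measure.prod_swap]
  have hswE : π Eθ' = π Eθ := by
    have : Eθ' = Prod.swap ⁻¹' Eθ := rfl
    rw [this, hswap _ (mE θ (1-θ))]
  have hswEη : π Eη' = π Eη := by
    have : Eη' = Prod.swap ⁻¹' Eη := rfl
    rw [this, hswap _ (mE η (1-η))]
  -- inclusions
  have hIsub : Eη ∩ Eη' ⊆ Eθ ∩ Eθ' := by
    rintro ⟨u, v⟩ ⟨h1, h2⟩
    simp only [hEη, hEη', hEθ, hEθ', mem_setOf_eq, mem_inter_iff] at *
    constructor
    · rcases le_total u v with h | h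
      · nlinarith [mul_nonneg (sub_nonneg.2 hηθ) (sub_nonneg.2 h)]
      · nlinarith [mul_nonneg (by linarith : (0:ℝ) ≤ 1 - θ - η) (sub_nonneg.2 h)]
    · rcases le_total v u with h | h
      · nlinarith [mul_nonneg (sub_nonneg.2 hηθ) (sub_nonneg.2 h)]
      · nlinarith [mul_nonneg (by linarith : (0:ℝ) ≤ 1 - θ - η) (sub_nonneg.2 h)]
  have hUsub : Eθ ∪ Eθ' ⊆ Eη ∪ Eη' := by
    rintro ⟨u, v⟩ (h | h) <;>
      simp only [hEη, hEη', hEθ, hEθ', mem_setOf_eq, mem_union] at *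
    · rcases le_total v u with hc | hc
      · left; nlinarith [mul_nonneg (sub_nonneg.2 hηθ) (sub_nonneg.2 hc)]
      · right; nlinarith [mul_nonneg (by linarith : (0:ℝ) ≤ 1 - θ - η) (sub_nonneg.2 hc)]
    · rcases le_total u v with hc | hc
      · right; nlinarith [mul_nonneg (sub_nonneg.2 hηθ) (sub_nonneg.2 hc)]
      · left; nlinarith [mul_nonneg (by linarith : (0:ℝ) ≤ 1 - θ - η) (sub_nonneg.2 hc)]
  -- difference decompositions
  have hIdiff : (Eθ ∩ Eθ') \ (Eη ∩ Eη') = DI ∪ Prod.swap ⁻¹' DI := by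
    ext ⟨u, v⟩
    simp only [hEη, hEη', hEθ, hEθ', hDI, mem_diff, mem_inter_iff, mem_union,
      mem_setOf_eq, mem_preimage, Prod.fst_swap, Prod.snd_swap, Prod.swap_prod_mk,
      not_and, not_le]
    constructor
    · rintro ⟨⟨h1, h2⟩, h3⟩
      rcases lt_trichotomy u v with hc | hc | hc
      · left
        refine ⟨hc, h1, ?_⟩
        rcases le_or_gt (η*u + (1-η)*v) t with h4 | h4
        · have h5 := h3 h4
          nlinarith [mul_nonneg (by linarith : (0:ℝ) ≤ 1 - 2*η) (by linarith : (0:ℝ) ≤ v - u)]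
        · exact h4
      · exfalso
        subst hc
        have : η*u + (1-η)*u ≤ t := by nlinarith
        have := h3 this
        nlinarith
      · right
        refine ⟨hc, h2, ?_⟩
        rcases le_or_gt (η*v + (1-η)*u) t with h4 | h4
        · exfalso
          have h5 : η*u + (1-η)*v ≤ t := by
            nlinarith [mul_nonneg (by linarith : (0:ℝ) ≤ 1 - 2*η) (by linarith : (0:ℝ) ≤ u - v)]
          have := h3 h5
          linarith
        · exact h4
    · rintro (⟨h1, h2, h3⟩ | ⟨h1, h2, h3⟩)
      · refine ⟨⟨h2, ?_⟩, fun h4 => absurd h4 (by linarith)⟩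
        nlinarith [mul_nonneg (by linarith : (0:ℝ) ≤ 1 - 2*θ) (by linarith : (0:ℝ) ≤ v - u)]
      · refine ⟨⟨?_, h2⟩, fun _ => h3⟩
        nlinarith [mul_nonneg (by linarith : (0:ℝ) ≤ 1 - 2*θ) (by linarith : (0:ℝ) ≤ u - v)]
  have hUdiff : (Eη ∪ Eη') \ (Eθ ∪ Eθ') = DU ∪ Prod.swap ⁻¹' DU := by
    ext ⟨u, v⟩
    simp only [hEη, hEη', hEθ, hEθ', hDU, mem_diff, mem_union,
      mem_setOf_eq, mem_preimage, Prod.fst_swap, Prod.snd_swap, Prod.swap_prod_mk,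
      not_or, not_le]
    constructor
    · rintro ⟨h1, h2, h3⟩
      rcases lt_trichotomy u v with hc | hc | hc
      · left
        refine ⟨hc, ?_, h3⟩
        rcases h1 with h1 | h1
        · nlinarith [mul_nonneg (by linarith : (0:ℝ) ≤ 1 - 2*η) (by linarith : (0:ℝ) ≤ v - u)]
        · exact h1
      · exfalso
        subst hc
        rcases h1 with h1 | h1 <;> nlinarith
      · right
        refine ⟨hc, ?_, h2⟩
        rcases h1 with h1 | h1
        · exact h1
        · nlinarith [mul_nonneg (by linarith : (0:ℝ) ≤ 1 - 2*η) (by linarith : (0:ℝ) ≤ u - v)]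
    · rintro (⟨h1, h2, h3⟩ | ⟨h1, h2, h3⟩)
      · refine ⟨Or.inr h2, ?_, h3⟩
        nlinarith [mul_nonneg (by linarith : (0:ℝ) ≤ 1 - 2*θ) (by linarith : (0:ℝ) ≤ v - u)]
      · refine ⟨Or.inl h2, h3, ?_⟩
        nlinarith [mul_nonneg (by linarith : (0:ℝ) ≤ 1 - 2*θ) (by linarith : (0:ℝ) ≤ u - v)]
  -- disjointness
  have hdisjI : Disjoint DI (Prod.swap ⁻¹' DI) := by
    rw [Set.disjoint_left]
    rintro ⟨u, v⟩ hp hq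
    simp only [hDI, mem_setOf_eq, mem_preimage, Prod.fst_swap, Prod.snd_swap] at hp hq
    exact absurd hq.1 (by linarith [hp.1])
  have hdisjU : Disjoint DU (Prod.swap ⁻¹' DU) := by
    rw [Set.disjoint_left]
    rintro ⟨u, v⟩ hp hq
    simp only [hDU, mem_setOf_eq, mem_preimage, Prod.fst_swap, Prod.snd_swap] at hp hq
    exact absurd hq.1 (by linarith [hp.1])
  -- core inequality π DI ≤ π DU
  have hcore : π DI ≤ π DU := by
    rw [hπ, Measure.prod_apply mDI, Measure.prod_apply mDU]
    have hae : ∀ᵐ v ∂ν, 0 < v := by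
      rw [ae_iff]
      have : {v : ℝ | ¬ 0 < v} = Iic 0 := by ext w; simp [not_lt]
      rw [this]; exact hpos
    refine lintegral_mono_ae ?_
    filter_upwards [hae] with v hv
    exact hkey v hv
  have hdiffI : π ((Eθ ∩ Eθ') \ (Eη ∩ Eη')) = π DI + π DI := by
    rw [hIdiff, measure_union hdisjI (mDI.preimage measurable_swap), hswap DI mDI]
  have hdiffU : π ((Eη ∪ Eη') \ (Eθ ∪ Eθ')) = π DU + π DU := by
    rw [hUdiff, measure_union hdisjU (mDU.preimage measurable_swap), hswap DU mDU]
  -- assemble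
  have mEθ' : MeasurableSet Eθ' := measurableSet_le (by fun_prop) measurable_const
  have mEη' : MeasurableSet Eη' := measurableSet_le (by fun_prop) measurable_const
  have hIdec : π (Eη ∩ Eη') + π ((Eθ ∩ Eθ') \ (Eη ∩ Eη')) = π (Eθ ∩ Eθ') := by
    have h := measure_add_diff (μ := π) ((mE η (1-η)).inter mEη').nullMeasurableSet (Eθ ∩ Eθ')
    rwa [Set.union_eq_self_of_subset_left hIsub] at h
  have hUdec : π (Eθ ∪ Eθ') + π ((Eη ∪ Eη') \ (Eθ ∪ Eθ')) = π (Eη ∪ Eη') := by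
    have h := measure_add_diff (μ := π) ((mE θ (1-θ)).union mEθ').nullMeasurableSet (Eη ∪ Eη')
    rwa [Set.union_eq_self_of_subset_left hUsub] at h
  have hsumθ : π (Eθ ∪ Eθ') + π (Eθ ∩ Eθ') = π Eθ + π Eθ' :=
    measure_union_add_inter (μ := π) Eθ mEθ'
  have hsumη : π (Eη ∪ Eη') + π (Eη ∩ Eη') = π Eη + π Eη' :=
    measure_union_add_inter (μ := π) Eη mEη'
  have hmain : π Eθ + π Eθ ≤ π Eη + π Eη := by
    calc π Eθ + π Eθ = π Eθ + π Eθ' := by rw [hswE]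
      _ = π (Eθ ∪ Eθ') + π (Eθ ∩ Eθ') := hsumθ.symm
      _ = π (Eθ ∪ Eθ') + (π (Eη ∩ Eη') + (π DI + π DI)) := by rw [← hdiffI, hIdec]
      _ ≤ π (Eθ ∪ Eθ') + (π (Eη ∩ Eη') + (π DU + π DU)) := by
          gcongr
      _ = (π (Eθ ∪ Eθ') + (π DU + π DU)) + π (Eη ∩ Eη') := by ring
      _ = π (Eη ∪ Eη') + π (Eη ∩ Eη') := by rw [← hdiffU, hUdec]
      _ = π Eη + π Eη' := hsumη
      _ = π Eη + π Eη := by rw [hswEη]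
  rw [← two_mul, ← two_mul] at hmain
  exact (ENNReal.mul_le_mul_iff_right two_ne_zero ENNReal.ofNat_ne_top).mp hmain

end ClassLAux2


/-- If `F` is a CDF of class `𝓛` (`F 0 = 0` and, for `0 ≤ y ≤ x`,
`z ↦ F(x+yz) + F(x+y/z)` is nonincreasing on `(0,1]`), `X₁, X₂` are i.i.d. with
CDF `F`, and `0 ≤ η ≤ θ ≤ 1/2`, then `θX₁ + (1−θ)X₂ ≥_st ηX₁ + (1−η)X₂`. -/
theorem classL_two_dim_dominance {Ω : Type*} [MeasurableSpace Ω]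
    (μ : Measure Ω) [IsProbabilityMeasure μ]
    (X₁ X₂ : Ω → ℝ) (hX₁ : Measurable X₁) (hX₂ : Measurable X₂)
    (hindep : IndepFun X₁ X₂ μ)
    (ν : Measure ℝ) [IsProbabilityMeasure ν]
    (hlaw₁ : μ.map X₁ = ν) (hlaw₂ : μ.map X₂ = ν)
    (F : ℝ → ℝ) (hF : ∀ x, F x = (ν (Set.Iic x)).toReal)
    (hF0 : F 0 = 0)
    (hL : ∀ x y : ℝ, 0 ≤ y → y ≤ x →
      AntitoneOn (fun z => F (x + y * z) + F (x + y / z)) (Set.Ioc 0 1))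
    (θ η : ℝ) (hη0 : 0 ≤ η) (hηθ : η ≤ θ) (hθ : θ ≤ 1 / 2) :
    ∀ x : ℝ,
      μ {ω | θ * X₁ ω + (1 - θ) * X₂ ω ≤ x}
        ≤ μ {ω | η * X₁ ω + (1 - η) * X₂ ω ≤ x} := by
  intro x
  by_cases hθz : θ = 0
  · have hηz : η = 0 := le_antisymm (hθz ▸ hηθ) hη0
    subst hθz; subst hηz
    exact le_rfl
  · have hθpos : 0 < θ := lt_of_le_of_ne (le_trans hη0 hηθ) (Ne.symm hθz)
    have hν0 : ν (Set.Iic (0:ℝ)) = 0 := by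
      have h0 : (ν (Set.Iic (0:ℝ))).toReal = 0 := by rw [← hF 0]; exact hF0
      rcases (ENNReal.toReal_eq_zero_iff _).mp h0 with h | h
      · exact h
      · exact absurd h (measure_ne_top ν _)
    have hjoint : μ.map (fun ω => (X₁ ω, X₂ ω)) = ν.prod ν := by
      rw [(ProbabilityTheory.indepFun_iff_map_prod_eq_prod_map_map
        hX₁.aemeasurable hX₂.aemeasurable).mp hindep, hlaw₁, hlaw₂]
    have hμset : ∀ a b : ℝ, μ {ω | a * X₁ ω + b * X₂ ω ≤ x}
        = (ν.prod ν) {p : ℝ × ℝ | a * p.1 + b * p.2 ≤ x} := by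
      intro a b
      rw [← hjoint, Measure.map_apply (hX₁.prodMk hX₂)
        (measurableSet_le (by fun_prop) measurable_const)]
      rfl
    rw [hμset θ (1-θ), hμset η (1-η)]
    apply ClassLAux2.reduction hη0 hηθ hθ hν0
    intro v hv
    by_cases hvt : v ≤ x
    · by_cases hηz : η = 0
      · subst hηz
        rw [ClassLAux2.sliceI_eq (by linarith) (by norm_num) hvt,
            ClassLAux2.sliceU0_eq hθpos hvt]
        have e : (x - 0*v)/(1-(0:ℝ)) = x := by norm_num
        rw [e]
        exact ClassLAux.key_zero F hF hL hθpos hθ (le_of_lt hv) hvt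
      · have hηpos : 0 < η := lt_of_le_of_ne hη0 (Ne.symm hηz)
        rw [ClassLAux2.sliceI_eq (by linarith) (by linarith) hvt,
            ClassLAux2.sliceU_eq hθpos (by linarith) hηpos hvt]
        exact ClassLAux.key_pos F hF hL hηpos hηθ hθ (le_of_lt hv) hvt
    · push_neg at hvt
      rw [ClassLAux2.sliceI_empty (le_trans hη0 hηθ) (by linarith) hvt,
          ClassLAux2.sliceU_empty hη0 (by linarith) hvt]
end

section
/- Let F, G, Fₙ, Gₙ be CDFs on ℝ with ‖Fₙ − F‖_∞ → 0 and ‖Gₙ − G‖_∞ → 0 (sup norm). Then for any θ₁, θ₂ > 0, the weighted convolutions converge uniformly: ‖L_{θ₁,θ₂,Fₙ}(Gₙ) − L_{θ₁,θ₂,F}(G)‖_∞ → 0, where L_{θ₁,θ₂,F}(G)(x) = ∫ G((x − θ₂t)/θ₁) dF(t). -/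
open MeasureTheory Filter Set

lemma stieltjes_nonneg (f : StieltjesFunction ℝ) (h : Tendsto f atBot (nhds 0)) (y : ℝ) :
    0 ≤ f y :=
  le_of_tendsto h (Filter.eventually_atBot.2 ⟨y, fun z hz => f.mono hz⟩)

lemma stieltjes_le_one (f : StieltjesFunction ℝ) (h : Tendsto f atTop (nhds 1)) (y : ℝ) :
    f y ≤ 1 :=
  ge_of_tendsto h (Filter.eventually_atTop.2 ⟨y, fun z hz => f.mono hz⟩)

lemma stieltjes_comp_integrable (f : StieltjesFunction ℝ)
    (h0 : Tendsto f atBot (nhds 0)) (h1 : Tendsto f atTop (nhds 1))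
    {m : ℝ → ℝ} (hm : Measurable m) (μ : Measure ℝ) [IsFiniteMeasure μ] :
    Integrable (fun t => f (m t)) μ := by
  refine Integrable.mono' (integrable_const 1)
    ((f.mono.measurable.comp hm).aestronglyMeasurable) (ae_of_all _ fun t => ?_)
  rw [Real.norm_eq_abs, abs_le]
  exact ⟨by linarith [stieltjes_nonneg f h0 (m t)], stieltjes_le_one f h1 (m t)⟩

lemma stiel_swap_integral (θ₁ θ₂ : ℝ) (hθ₁ : 0 < θ₁) (hθ₂ : 0 < θ₂)
    (F G : StieltjesFunction ℝ)
    (hFbot : Tendsto F atBot (nhds 0)) (hFtop : Tendsto F atTop (nhds 1))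
    (hGbot : Tendsto G atBot (nhds 0)) (hGtop : Tendsto G atTop (nhds 1)) (x : ℝ) :
    ∫ t, G ((x - θ₂ * t) / θ₁) ∂F.measure = ∫ s, F ((x - θ₁ * s) / θ₂) ∂G.measure := by
  haveI := F.isProbabilityMeasure hFbot hFtop
  haveI := G.isProbabilityMeasure hGbot hGtop
  have hmh : Measurable (fun t : ℝ => (x - θ₂ * t) / θ₁) := by fun_prop
  have hmk : Measurable (fun s : ℝ => (x - θ₁ * s) / θ₂) := by fun_prop
  rw [integral_eq_lintegral_of_nonneg_ae
      (ae_of_all _ fun t => stieltjes_nonneg G hGbot _)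
      ((G.mono.measurable.comp hmh).aestronglyMeasurable),
    integral_eq_lintegral_of_nonneg_ae
      (ae_of_all _ fun s => stieltjes_nonneg F hFbot _)
      ((F.mono.measurable.comp hmk).aestronglyMeasurable)]
  congr 1
  set S : Set (ℝ × ℝ) := {p : ℝ × ℝ | θ₂ * p.1 + θ₁ * p.2 ≤ x} with hS
  have hSm : MeasurableSet S :=
    measurableSet_le (by fun_prop) measurable_const
  have h1 : ∀ t : ℝ, Iic ((x - θ₂ * t) / θ₁) = Prod.mk t ⁻¹' S := by
    intro t
    ext s
    simp only [mem_Iic, mem_preimage, hS, mem_setOf_eq]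
    rw [le_div_iff₀ hθ₁]
    constructor <;> intro <;> linarith
  have h2 : ∀ s : ℝ, Iic ((x - θ₁ * s) / θ₂) = (fun t => (t, s)) ⁻¹' S := by
    intro s
    ext t
    simp only [mem_Iic, mem_preimage, hS, mem_setOf_eq]
    rw [le_div_iff₀ hθ₂]
    constructor <;> intro <;> linarith
  calc ∫⁻ t, ENNReal.ofReal (G ((x - θ₂ * t) / θ₁)) ∂F.measure
      = ∫⁻ t, G.measure (Prod.mk t ⁻¹' S) ∂F.measure := by
        congr 1; ext t
        rw [← h1, G.measure_Iic hGbot, sub_zero]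
    _ = (F.measure.prod G.measure) S := (Measure.prod_apply hSm).symm
    _ = ∫⁻ s, F.measure ((fun t => (t, s)) ⁻¹' S) ∂G.measure :=
        Measure.prod_apply_symm hSm
    _ = ∫⁻ s, ENNReal.ofReal (F ((x - θ₁ * s) / θ₂)) ∂G.measure := by
        congr 1; ext s
        rw [← h2, F.measure_Iic hFbot, sub_zero]

/-- If CDFs `Fₙ → F` and `Gₙ → G` uniformly, then the weighted convolutions
`L_{θ₁,θ₂,Fₙ}(Gₙ)` converge uniformly to `L_{θ₁,θ₂,F}(G)`, where
`L_{θ₁,θ₂,F}(G)(x) = ∫ G((x − θ₂ t)/θ₁) dF(t)`. -/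
theorem weightedConvolution_uniform_convergence (θ₁ θ₂ : ℝ) (hθ₁ : 0 < θ₁) (hθ₂ : 0 < θ₂)
    (F G : StieltjesFunction ℝ) (Fn Gn : ℕ → StieltjesFunction ℝ)
    (hFbot : Tendsto F atBot (nhds 0)) (hFtop : Tendsto F atTop (nhds 1))
    (hGbot : Tendsto G atBot (nhds 0)) (hGtop : Tendsto G atTop (nhds 1))
    (hFnbot : ∀ n, Tendsto (Fn n) atBot (nhds 0)) (hFntop : ∀ n, Tendsto (Fn n) atTop (nhds 1))
    (hGnbot : ∀ n, Tendsto (Gn n) atBot (nhds 0)) (hGntop : ∀ n, Tendsto (Gn n) atTop (nhds 1))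
    (hFconv : ∀ ε > (0 : ℝ), ∃ N, ∀ n ≥ N, ∀ x : ℝ, |Fn n x - F x| ≤ ε)
    (hGconv : ∀ ε > (0 : ℝ), ∃ N, ∀ n ≥ N, ∀ x : ℝ, |Gn n x - G x| ≤ ε) :
    ∀ ε > (0 : ℝ), ∃ N, ∀ n ≥ N, ∀ x : ℝ,
      |(∫ t, Gn n ((x - θ₂ * t) / θ₁) ∂(Fn n).measure)
        - ∫ t, G ((x - θ₂ * t) / θ₁) ∂F.measure| ≤ ε := by
  intro ε hε
  obtain ⟨N₁, hN₁⟩ := hFconv (ε / 2) (by positivity)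
  obtain ⟨N₂, hN₂⟩ := hGconv (ε / 2) (by positivity)
  refine ⟨max N₁ N₂, fun n hn x => ?_⟩
  haveI := (Fn n).isProbabilityMeasure (hFnbot n) (hFntop n)
  haveI := G.isProbabilityMeasure hGbot hGtop
  have hmh : Measurable (fun t : ℝ => (x - θ₂ * t) / θ₁) := by fun_prop
  have hmk : Measurable (fun s : ℝ => (x - θ₁ * s) / θ₂) := by fun_prop
  set A := ∫ t, Gn n ((x - θ₂ * t) / θ₁) ∂(Fn n).measure with hA
  set B := ∫ t, G ((x - θ₂ * t) / θ₁) ∂(Fn n).measure with hB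
  set C := ∫ t, G ((x - θ₂ * t) / θ₁) ∂F.measure with hC
  have hAB : |A - B| ≤ ε / 2 := by
    rw [hA, hB, ← integral_sub
      (stieltjes_comp_integrable (Gn n) (hGnbot n) (hGntop n) hmh _)
      (stieltjes_comp_integrable G hGbot hGtop hmh _)]
    have := norm_integral_le_of_norm_le_const (μ := (Fn n).measure)
      (f := fun t => Gn n ((x - θ₂ * t) / θ₁) - G ((x - θ₂ * t) / θ₁)) (C := ε / 2)
      (ae_of_all _ fun t => by
        rw [Real.norm_eq_abs]
        exact hN₂ n (le_trans (le_max_right N₁ N₂) hn) _)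
    simpa using this
  have hBC : |B - C| ≤ ε / 2 := by
    rw [hB, hC, stiel_swap_integral θ₁ θ₂ hθ₁ hθ₂ (Fn n) G (hFnbot n) (hFntop n) hGbot hGtop x,
      stiel_swap_integral θ₁ θ₂ hθ₁ hθ₂ F G hFbot hFtop hGbot hGtop x,
      ← integral_sub
        (stieltjes_comp_integrable (Fn n) (hFnbot n) (hFntop n) hmk _)
        (stieltjes_comp_integrable F hFbot hFtop hmk _)]
    have := norm_integral_le_of_norm_le_const (μ := G.measure)
      (f := fun s => Fn n ((x - θ₁ * s) / θ₂) - F ((x - θ₁ * s) / θ₂)) (C := ε / 2)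
      (ae_of_all _ fun s => by
        rw [Real.norm_eq_abs]
        exact hN₁ n (le_trans (le_max_left N₁ N₂) hn) _)
    simpa using this
  calc |A - C| ≤ |A - B| + |B - C| := abs_sub_le A B C
    _ ≤ ε / 2 + ε / 2 := add_le_add hAB hBC
    _ = ε := by ring
end

section
/- Let F be a continuous CDF and θ₁, θ₂ > 0. Let 𝔽ₙ be the empirical CDF of an i.i.d. sample of size n from F, and define 𝔽_{n,θ}(x) = ∫ 𝔽ₙ((x − θ₂t)/θ₁) d𝔽ₙ(t) and F_θ(x) = ∫ F((x − θ₂t)/θ₁) dF(t). Then ‖𝔽_{n,θ} − F_θ‖_∞ ≤ 2·‖𝔽ₙ − F‖_∞, and hence ‖𝔽_{n,θ} − F_θ‖_∞ → 0 almost surely as n → ∞. -/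
open MeasureTheory ProbabilityTheory Filter Topology

/-- Quantile existence for a continuous CDF-like function. -/
lemma aux_quantile {F : ℝ → ℝ} (hmono : Monotone F) (hcont : Continuous F)
    (htop : Tendsto F atTop (𝓝 1)) (hbot : Tendsto F atBot (𝓝 0))
    {r : ℝ} (hr0 : 0 < r) (hr1 : r < 1) :
    ∃ q : ℝ, F q = r ∧ (∀ y, r ≤ F y → q ≤ y) ∧ (∀ y, F y < r → y < q) := by
  set S : Set ℝ := {x | r ≤ F x} with hS
  have hclosed : IsClosed S := isClosed_le continuous_const hcont
  have hne : S.Nonempty := by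
    obtain ⟨x, hx⟩ := (htop.eventually (eventually_ge_nhds hr1)).exists
    exact ⟨x, hx⟩
  obtain ⟨x₀, hx₀⟩ := eventually_atBot.mp (hbot.eventually (eventually_lt_nhds hr0))
  have hbdd : BddBelow S := by
    refine ⟨x₀, fun x hx => ?_⟩
    by_contra h
    push_neg at h
    have : F x < r := lt_of_le_of_lt (hmono h.le) (hx₀ x₀ le_rfl)
    exact absurd hx (by simpa [hS] using not_le.mpr this)
  set q := sInf S with hq
  have hqS : q ∈ S := hclosed.csInf_mem hne hbdd
  have h1 : ∀ y, r ≤ F y → q ≤ y := fun y hy => csInf_le hbdd hy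
  have h2 : ∀ y, F y < r → y < q := by
    intro y hy
    by_contra h
    push_neg at h
    exact absurd (le_trans hqS (hmono h)) (not_le.mpr hy)
  refine ⟨q, le_antisymm ?_ hqS, h1, h2⟩
  -- F q ≤ r : approach from the left
  have hseq : Tendsto (fun m : ℕ => q - 1 / (m + 1)) atTop (𝓝 q) := by
    have := (tendsto_one_div_add_atTop_nhds_zero_nat : Tendsto (fun n : ℕ => 1 / ((n : ℝ) + 1)) atTop (𝓝 0))
    simpa using tendsto_const_nhds.sub this
  have : Tendsto (fun m : ℕ => F (q - 1 / (m + 1))) atTop (𝓝 (F q)) :=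
    (hcont.tendsto q).comp hseq
  refine le_of_tendsto this (Eventually.of_forall fun m => ?_)
  have hlt : q - 1 / ((m : ℝ) + 1) < q := by
    have : (0:ℝ) < 1 / ((m:ℝ) + 1) := by positivity
    linarith
  by_contra h
  push_neg at h
  exact absurd (h1 _ h.le) (not_le.mpr hlt)

/-- Deterministic Glivenko–Cantelli grid estimate. -/
lemma aux_gc_det {F G : ℝ → ℝ} (hFmono : Monotone F)
    (hF0 : ∀ y, 0 ≤ F y) (hF1 : ∀ y, F y ≤ 1)
    (hGmono : Monotone G) (hG0 : ∀ y, 0 ≤ G y) (hG1 : ∀ y, G y ≤ 1)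
    {k : ℕ} (hk : 1 ≤ k) (Q : ℕ → ℝ)
    (hQval : ∀ j, 1 ≤ j → j < k → F (Q j) = (j : ℝ) / k)
    (hQle : ∀ j, 1 ≤ j → j < k → ∀ y, (j : ℝ) / k ≤ F y → Q j ≤ y)
    (hQlt : ∀ j, 1 ≤ j → j < k → ∀ y, F y < (j : ℝ) / k → y < Q j)
    {δ : ℝ} (hδ0 : 0 ≤ δ) (hδ : ∀ j, 1 ≤ j → j < k → |G (Q j) - F (Q j)| ≤ δ)
    (y : ℝ) : |G y - F y| ≤ 1 / k + δ := by
  have hkpos : (0:ℝ) < k := by exact_mod_cast hk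
  have hfy0 := hF0 y
  have hfy1 := hF1 y
  rw [abs_sub_le_iff]
  constructor
  · -- G y - F y ≤ 1/k + δ
    by_cases hcase : ⌊(k : ℝ) * F y⌋₊ + 1 < k
    · set j := ⌊(k : ℝ) * F y⌋₊ + 1 with hj
      have hj1 : 1 ≤ j := Nat.le_add_left 1 _
      have hflt : F y < (j : ℝ) / k := by
        rw [lt_div_iff₀ hkpos]
        have := Nat.lt_floor_add_one ((k : ℝ) * F y)
        push_cast [hj]
        linarith [this]
      have hylt : y < Q j := hQlt j hj1 hcase y hflt
      have h1 : G y ≤ G (Q j) := hGmono hylt.le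
      have h2 : G (Q j) - F (Q j) ≤ δ := (abs_le.mp (hδ j hj1 hcase)).2
      have h3 : (j : ℝ) / k ≤ F y + 1 / k := by
        have hfl : (⌊(k : ℝ) * F y⌋₊ : ℝ) ≤ (k : ℝ) * F y :=
          Nat.floor_le (by positivity)
        have hjc : ((j : ℕ) : ℝ) = (⌊(k : ℝ) * F y⌋₊ : ℝ) + 1 := by push_cast [hj]; ring
        rw [hjc, add_div]
        refine add_le_add ?_ le_rfl
        rw [div_le_iff₀ hkpos]
        linarith
      have := hQval j hj1 hcase
      linarith
    · -- F y ≥ (k-1)/k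
      push_neg at hcase
      have : (k : ℝ) ≤ ⌊(k : ℝ) * F y⌋₊ + 1 := by exact_mod_cast hcase
      have hfl : (⌊(k : ℝ) * F y⌋₊ : ℝ) ≤ (k : ℝ) * F y := Nat.floor_le (by positivity)
      have hky : ((k : ℝ) - 1) / k ≤ F y := by
        rw [div_le_iff₀ hkpos]
        linarith
      have heq : ((k : ℝ) - 1) / k = 1 - 1 / k := by field_simp
      have := hG1 y
      rw [heq] at hky
      linarith
  · -- F y - G y ≤ 1/k + δ
    rcases Nat.eq_or_lt_of_le hk with hk1 | hk2
    · -- k = 1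
      have : (1:ℝ)/k = 1 := by rw [← hk1]; norm_num
      have := hG0 y
      linarith
    · by_cases h0 : ⌊(k : ℝ) * F y⌋₊ = 0
      · have : (k : ℝ) * F y < 1 := by
          by_contra h
          push_neg at h
          have : 1 ≤ ⌊(k : ℝ) * F y⌋₊ := Nat.le_floor (by exact_mod_cast h)
          omega
        have : F y < 1 / k := by rw [lt_div_iff₀ hkpos]; linarith
        have := hG0 y
        linarith
      · by_cases hlt : ⌊(k : ℝ) * F y⌋₊ < k
        · set j := ⌊(k : ℝ) * F y⌋₊ with hj
          have hj1 : 1 ≤ j := Nat.one_le_iff_ne_zero.mpr h0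
          have hjle : (j : ℝ) / k ≤ F y := by
            rw [div_le_iff₀ hkpos]
            have := Nat.floor_le (show (0:ℝ) ≤ (k:ℝ) * F y by positivity)
            linarith [this]
          have hqy : Q j ≤ y := hQle j hj1 hlt y hjle
          have h1 : G (Q j) ≤ G y := hGmono hqy
          have h2 : F (Q j) - G (Q j) ≤ δ := by
            have := (abs_le.mp (hδ j hj1 hlt)).1
            linarith
          have h3 : F y ≤ (j : ℝ) / k + 1 / k := by
            rw [← add_div, le_div_iff₀ hkpos]
            have := Nat.lt_floor_add_one ((k : ℝ) * F y)
            push_cast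
            linarith [this]
          have := hQval j hj1 hlt
          linarith
        · -- ⌊k F y⌋ ≥ k, so F y = 1; use j = k - 1
          push_neg at hlt
          set j := k - 1 with hj
          have hj1 : 1 ≤ j := by omega
          have hjk : j < k := by omega
          have hjr : (j : ℝ) = (k : ℝ) - 1 := by
            rw [hj]; push_cast [Nat.cast_sub hk]; ring
          have hjle : (j : ℝ) / k ≤ F y := by
            rw [div_le_iff₀ hkpos]
            have h1 : (k : ℝ) ≤ ⌊(k : ℝ) * F y⌋₊ := by exact_mod_cast hlt
            have h2 : (⌊(k : ℝ) * F y⌋₊ : ℝ) ≤ (k : ℝ) * F y := Nat.floor_le (by positivity)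
            rw [hjr]
            nlinarith
          have hqy : Q j ≤ y := hQle j hj1 hjk y hjle
          have h1 : G (Q j) ≤ G y := hGmono hqy
          have h2 : F (Q j) - G (Q j) ≤ δ := by
            have := (abs_le.mp (hδ j hj1 hjk)).1
            linarith
          have h3 : F y ≤ (j : ℝ) / k + 1 / k := by
            rw [hjr]
            have : ((k:ℝ) - 1) / k + 1 / k = 1 := by field_simp; ring
            linarith
          have := hQval j hj1 hjk
          linarith

/-- SLLN for the empirical CDF at a fixed point. -/
lemma aux_slln {Ω : Type*} [MeasurableSpace Ω] (μ : Measure Ω) [IsProbabilityMeasure μ]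
    (X : ℕ → Ω → ℝ) (hmeas : ∀ i, Measurable (X i))
    (hindep : iIndepFun X μ)
    (ν : Measure ℝ) [IsProbabilityMeasure ν] (hlaw : ∀ i, μ.map (X i) = ν) (c : ℝ) :
    ∀ᵐ ω ∂μ, Tendsto
      (fun n : ℕ => (1 / (n : ℝ)) * ∑ i ∈ Finset.range n, (if X i ω ≤ c then (1 : ℝ) else 0))
      atTop (𝓝 ((ν (Set.Iic c)).toReal)) := by
  set f : ℝ → ℝ := (Set.Iic c).indicator (fun _ => 1) with hf
  have hfmeas : Measurable f := measurable_const.indicator measurableSet_Iic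
  set Y : ℕ → Ω → ℝ := fun i => f ∘ X i with hY
  have hindep' : Pairwise (Function.onFun (IndepFun · · μ) Y) := by
    intro i j hij
    exact (hindep.comp (fun _ => f) (fun _ => hfmeas)).indepFun hij
  have hident : ∀ i, IdentDistrib (Y i) (Y 0) μ μ := by
    intro i
    refine ⟨(hfmeas.comp (hmeas i)).aemeasurable, (hfmeas.comp (hmeas 0)).aemeasurable, ?_⟩
    calc μ.map (Y i) = (μ.map (X i)).map f := (Measure.map_map hfmeas (hmeas i)).symm
    _ = ν.map f := by rw [hlaw i]
    _ = (μ.map (X 0)).map f := by rw [hlaw 0]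
    _ = μ.map (Y 0) := Measure.map_map hfmeas (hmeas 0)
  have hint : Integrable (Y 0) μ := by
    refine (integrable_const (1:ℝ)).mono'
      ((hfmeas.comp (hmeas 0)).aestronglyMeasurable) (Eventually.of_forall fun ω => ?_)
    simp only [hY, hf, Function.comp_apply, Set.indicator_apply]
    split_ifs <;> simp
  have hmean : μ[Y 0] = (ν (Set.Iic c)).toReal := by
    calc μ[Y 0] = ∫ y, f y ∂(μ.map (X 0)) :=
          (integral_map (hmeas 0).aemeasurable hfmeas.aestronglyMeasurable).symm
    _ = ∫ y, f y ∂ν := by rw [hlaw 0]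
    _ = (ν (Set.Iic c)).toReal := integral_indicator_one measurableSet_Iic
  have := strong_law_ae_real Y hint hindep' hident
  rw [hmean] at this
  filter_upwards [this] with ω hω
  have heq : (fun n : ℕ => (1 / (n : ℝ)) * ∑ i ∈ Finset.range n, (if X i ω ≤ c then (1:ℝ) else 0))
      = fun n : ℕ => (∑ i ∈ Finset.range n, Y i ω) / n := by
    funext n
    have hsum : (∑ i ∈ Finset.range n, Y i ω)
        = ∑ i ∈ Finset.range n, (if X i ω ≤ c then (1:ℝ) else 0) := by
      refine Finset.sum_congr rfl fun i _ => ?_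
      simp only [hY, hf]
      simp [Set.indicator_apply]
    rw [hsum]
    ring
  rw [heq]
  exact hω

/-- For i.i.d. `X₁, X₂, … ~ F` (continuous CDF, law `ν`) and `θ₁, θ₂ > 0`, with
`𝔽ₙ` the empirical CDF, `𝔽_{n,θ}(x) = ∫ 𝔽ₙ((x−θ₂t)/θ₁) d𝔽ₙ(t)` and
`F_θ(x) = ∫ F((x−θ₂t)/θ₁) dF(t)`, one has the deterministic bound
`‖𝔽_{n,θ} − F_θ‖_∞ ≤ 2‖𝔽ₙ − F‖_∞`, and hence `‖𝔽_{n,θ} − F_θ‖_∞ → 0` a.s. -/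
theorem plugin_uniform_convergence {Ω : Type*} [MeasurableSpace Ω]
    (μ : Measure Ω) [IsProbabilityMeasure μ]
    (X : ℕ → Ω → ℝ) (hmeas : ∀ i, Measurable (X i))
    (hindep : iIndepFun X μ)
    (ν : Measure ℝ) [IsProbabilityMeasure ν] (hlaw : ∀ i, μ.map (X i) = ν)
    (F : ℝ → ℝ) (hF : ∀ x, F x = (ν (Set.Iic x)).toReal) (hFcont : Continuous F)
    (θ₁ θ₂ : ℝ) (hθ₁ : 0 < θ₁) (hθ₂ : 0 < θ₂)
    (Fn : ℕ → Ω → ℝ → ℝ)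
    (hFn : ∀ n ω x, Fn n ω x
      = (1 / (n : ℝ)) * ∑ i ∈ Finset.range n, (if X i ω ≤ x then (1 : ℝ) else 0))
    (Fnθ : ℕ → Ω → ℝ → ℝ)
    (hFnθ : ∀ n ω x, Fnθ n ω x
      = (1 / (n : ℝ)) * ∑ j ∈ Finset.range n, Fn n ω ((x - θ₂ * X j ω) / θ₁))
    (Fθ : ℝ → ℝ) (hFθ : ∀ x, Fθ x = ∫ t, F ((x - θ₂ * t) / θ₁) ∂ν) :
    (∀ n, 0 < n → ∀ ω x, |Fnθ n ω x - Fθ x| ≤ 2 * ⨆ y : ℝ, |Fn n ω y - F y|)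
    ∧ (∀ᵐ ω ∂μ, Tendsto (fun n => ⨆ x : ℝ, |Fnθ n ω x - Fθ x|) atTop (nhds 0)) := by
  -- Facts about F via the mathlib cdf
  have hFcdf : F = fun x => cdf ν x := funext fun x => by rw [hF x, cdf_eq_real]; rfl
  have hFmono : Monotone F := by rw [hFcdf]; exact fun a b hab => monotone_cdf ν hab
  have hF0 : ∀ y, 0 ≤ F y := by rw [hFcdf]; exact fun y => cdf_nonneg ν y
  have hF1 : ∀ y, F y ≤ 1 := by rw [hFcdf]; exact fun y => cdf_le_one ν y
  have htop : Tendsto F atTop (𝓝 1) := by rw [hFcdf]; exact tendsto_cdf_atTop ν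
  have hbot : Tendsto F atBot (𝓝 0) := by rw [hFcdf]; exact tendsto_cdf_atBot ν
  -- Facts about Fn
  have hFnmono : ∀ n ω, Monotone (Fn n ω) := by
    intro n ω a b hab
    rw [hFn, hFn]
    refine mul_le_mul_of_nonneg_left ?_ (one_div_nonneg.mpr (Nat.cast_nonneg n))
    refine Finset.sum_le_sum fun i _ => ?_
    split_ifs with h1 h2
    · exact le_rfl
    · exact absurd (h1.trans hab) h2
    · norm_num
    · exact le_rfl
  have hFn0 : ∀ n ω y, 0 ≤ Fn n ω y := by
    intro n ω y
    rw [hFn]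
    refine mul_nonneg (one_div_nonneg.mpr (Nat.cast_nonneg n)) ?_
    refine Finset.sum_nonneg fun i _ => ?_
    split_ifs <;> norm_num
  have hFn1 : ∀ n ω y, Fn n ω y ≤ 1 := by
    intro n ω y
    rcases Nat.eq_zero_or_pos n with h | h
    · subst h; rw [hFn]; simp
    · rw [hFn]
      have hnpos : (0:ℝ) < n := by exact_mod_cast h
      have hsum : (∑ i ∈ Finset.range n, (if X i ω ≤ y then (1:ℝ) else 0)) ≤ (n:ℝ) := by
        calc (∑ i ∈ Finset.range n, (if X i ω ≤ y then (1:ℝ) else 0))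
            ≤ ∑ i ∈ Finset.range n, (1:ℝ) :=
              Finset.sum_le_sum fun i _ => by split_ifs <;> norm_num
        _ = (n:ℝ) := by simp
      calc (1/(n:ℝ)) * (∑ i ∈ Finset.range n, (if X i ω ≤ y then (1:ℝ) else 0))
          ≤ (1/(n:ℝ)) * (n:ℝ) :=
            mul_le_mul_of_nonneg_left hsum (one_div_nonneg.mpr hnpos.le)
      _ = 1 := by field_simp
  have habs : ∀ n ω y, |Fn n ω y - F y| ≤ 1 := by
    intro n ω y
    have h1 := hFn0 n ω y; have h2 := hFn1 n ω y
    have h3 := hF0 y; have h4 := hF1 y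
    rw [abs_le]; constructor <;> linarith
  have hbdd : ∀ n ω, BddAbove (Set.range fun y => |Fn n ω y - F y|) := by
    intro n ω
    refine ⟨1, fun z hz => ?_⟩
    obtain ⟨y, rfl⟩ := hz
    exact habs n ω y
  have hle : ∀ n ω y, |Fn n ω y - F y| ≤ ⨆ z : ℝ, |Fn n ω z - F z| :=
    fun n ω y => le_ciSup (hbdd n ω) y
  -- Part 1: the deterministic bound
  have part1 : ∀ n, 0 < n → ∀ ω x, |Fnθ n ω x - Fθ x| ≤ 2 * ⨆ y : ℝ, |Fn n ω y - F y| := by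
    intro n hn ω x
    have hnpos : (0:ℝ) < n := by exact_mod_cast hn
    have key : ∀ (i : ℕ) (t : ℝ),
        (X i ω ≤ (x - θ₂ * t) / θ₁) ↔ (t ≤ (x - θ₁ * X i ω) / θ₂) := by
      intro i t
      rw [le_div_iff₀ hθ₁, le_div_iff₀ hθ₂]
      constructor <;> intro h <;> linarith
    -- swap the double sum
    have e1 : Fnθ n ω x
        = (1/(n:ℝ)) * ∑ i ∈ Finset.range n, Fn n ω ((x - θ₁ * X i ω) / θ₂) := by
      simp_rw [hFnθ, hFn, key]
      simp_rw [← Finset.mul_sum]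
      rw [Finset.sum_comm]
    -- expand the integral of Fn ∘ g
    have hig : ∀ t : ℝ, Fn n ω ((x - θ₂ * t) / θ₁)
        = (1/(n:ℝ)) * ∑ i ∈ Finset.range n,
            (Set.Iic ((x - θ₁ * X i ω) / θ₂)).indicator (1 : ℝ → ℝ) t := by
      intro t
      rw [hFn]
      congr 1
      refine Finset.sum_congr rfl fun i _ => ?_
      simp [Set.indicator_apply, key i t]
    have hintFn : Integrable (fun t => Fn n ω ((x - θ₂ * t) / θ₁)) ν := by
      rw [show (fun t => Fn n ω ((x - θ₂ * t) / θ₁))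
          = fun t => (1/(n:ℝ)) * ∑ i ∈ Finset.range n,
              (Set.Iic ((x - θ₁ * X i ω) / θ₂)).indicator (1 : ℝ → ℝ) t from funext hig]
      exact (integrable_finset_sum _ fun i _ =>
        (integrable_const (1:ℝ)).indicator measurableSet_Iic).const_mul _
    have hintF : Integrable (fun t => F ((x - θ₂ * t) / θ₁)) ν := by
      refine (integrable_const (1:ℝ)).mono' ?_ (Eventually.of_forall fun t => ?_)
      · exact (hFcont.comp
          ((continuous_const.sub (continuous_const.mul continuous_id)).div_const θ₁)).aestronglyMeasurable
      · rw [Real.norm_eq_abs, abs_le]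
        exact ⟨by linarith [hF0 ((x - θ₂ * t) / θ₁)], hF1 _⟩
    have e2 : ∫ t, Fn n ω ((x - θ₂ * t) / θ₁) ∂ν
        = (1/(n:ℝ)) * ∑ i ∈ Finset.range n, F ((x - θ₁ * X i ω) / θ₂) := by
      simp_rw [hig]
      rw [integral_const_mul]
      have hsum_int : ∫ a, (∑ i ∈ Finset.range n,
            (Set.Iic ((x - θ₁ * X i ω) / θ₂)).indicator (1 : ℝ → ℝ) a) ∂ν
          = ∑ i ∈ Finset.range n, ∫ a,
            (Set.Iic ((x - θ₁ * X i ω) / θ₂)).indicator (1 : ℝ → ℝ) a ∂ν :=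
        integral_finset_sum _ fun i _ =>
          (integrable_const (1:ℝ)).indicator measurableSet_Iic
      rw [hsum_int]
      congr 1
      refine Finset.sum_congr rfl fun i _ => ?_
      rw [integral_indicator_one measurableSet_Iic, hF]; rfl
    have hsplit : Fnθ n ω x - Fθ x
        = ((1/(n:ℝ)) * ∑ i ∈ Finset.range n,
            (Fn n ω ((x - θ₁ * X i ω) / θ₂) - F ((x - θ₁ * X i ω) / θ₂)))
          + ∫ t, (Fn n ω ((x - θ₂ * t) / θ₁) - F ((x - θ₂ * t) / θ₁)) ∂ν := by
      rw [integral_sub hintFn hintF, e2, hFθ, e1]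
      rw [Finset.sum_sub_distrib, mul_sub]
      ring
    set D := ⨆ y : ℝ, |Fn n ω y - F y| with hD
    have hle' : ∀ y, |Fn n ω y - F y| ≤ D := fun y => by rw [hD]; exact hle n ω y
    have hD0 : 0 ≤ D := le_trans (abs_nonneg _) (hle' 0)
    have hA : |(1/(n:ℝ)) * ∑ i ∈ Finset.range n,
        (Fn n ω ((x - θ₁ * X i ω) / θ₂) - F ((x - θ₁ * X i ω) / θ₂))| ≤ D := by
      rw [abs_mul, abs_of_nonneg (one_div_nonneg.mpr hnpos.le)]
      have h1 := Finset.abs_sum_le_sum_abs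
        (fun i => Fn n ω ((x - θ₁ * X i ω) / θ₂) - F ((x - θ₁ * X i ω) / θ₂))
        (Finset.range n)
      have h2 : (∑ i ∈ Finset.range n,
          |Fn n ω ((x - θ₁ * X i ω) / θ₂) - F ((x - θ₁ * X i ω) / θ₂)|) ≤ (n:ℝ) * D := by
        calc (∑ i ∈ Finset.range n,
            |Fn n ω ((x - θ₁ * X i ω) / θ₂) - F ((x - θ₁ * X i ω) / θ₂)|)
            ≤ ∑ _i ∈ Finset.range n, D := Finset.sum_le_sum fun i _ => hle' _
        _ = (n:ℝ) * D := by simp [mul_comm]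
      calc (1/(n:ℝ)) * |∑ i ∈ Finset.range n,
          (Fn n ω ((x - θ₁ * X i ω) / θ₂) - F ((x - θ₁ * X i ω) / θ₂))|
          ≤ (1/(n:ℝ)) * ((n:ℝ) * D) :=
            mul_le_mul_of_nonneg_left (h1.trans h2) (one_div_nonneg.mpr hnpos.le)
      _ = D := by field_simp
    have hB : |∫ t, (Fn n ω ((x - θ₂ * t) / θ₁) - F ((x - θ₂ * t) / θ₁)) ∂ν| ≤ D := by
      have hb : ∀ᵐ t ∂ν, ‖Fn n ω ((x - θ₂ * t) / θ₁) - F ((x - θ₂ * t) / θ₁)‖ ≤ D :=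
        Eventually.of_forall fun t => by
          simpa [Real.norm_eq_abs] using hle' ((x - θ₂ * t) / θ₁)
      have h2 := norm_integral_le_of_norm_le_const (μ := ν) hb
      simpa [Real.norm_eq_abs, measure_univ] using h2
    rw [hsplit]
    calc |((1/(n:ℝ)) * ∑ i ∈ Finset.range n,
          (Fn n ω ((x - θ₁ * X i ω) / θ₂) - F ((x - θ₁ * X i ω) / θ₂)))
        + ∫ t, (Fn n ω ((x - θ₂ * t) / θ₁) - F ((x - θ₂ * t) / θ₁)) ∂ν|
        ≤ |(1/(n:ℝ)) * ∑ i ∈ Finset.range n,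
          (Fn n ω ((x - θ₁ * X i ω) / θ₂) - F ((x - θ₁ * X i ω) / θ₂))|
          + |∫ t, (Fn n ω ((x - θ₂ * t) / θ₁) - F ((x - θ₂ * t) / θ₁)) ∂ν| := abs_add_le _ _
    _ ≤ 2 * D := by linarith
  refine ⟨part1, ?_⟩
  -- Part 2: almost sure convergence
  -- quantile grid
  have hQex : ∀ k j : ℕ, ∃ q : ℝ, 1 ≤ j → j < k →
      F q = (j:ℝ)/k ∧ (∀ y, (j:ℝ)/k ≤ F y → q ≤ y) ∧ (∀ y, F y < (j:ℝ)/k → y < q) := by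
    intro k j
    by_cases h : 1 ≤ j ∧ j < k
    · have hkpos : (0:ℝ) < k := by
        have : 0 < k := lt_of_le_of_lt (Nat.zero_le j) h.2
        exact_mod_cast this
      have hr0 : 0 < (j:ℝ)/k := by
        apply div_pos ?_ hkpos
        exact_mod_cast h.1
      have hr1 : (j:ℝ)/k < 1 := by
        rw [div_lt_one hkpos]
        exact_mod_cast h.2
      obtain ⟨q, h1, h2, h3⟩ := aux_quantile hFmono hFcont htop hbot hr0 hr1
      exact ⟨q, fun _ _ => ⟨h1, h2, h3⟩⟩
    · exact ⟨0, fun h1 h2 => absurd ⟨h1, h2⟩ h⟩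
  choose Q hQ using hQex
  have haegrid : ∀ᵐ ω ∂μ, ∀ k j : ℕ,
      Tendsto (fun n => Fn n ω (Q k j)) atTop (𝓝 (F (Q k j))) := by
    rw [ae_all_iff]
    intro k
    rw [ae_all_iff]
    intro j
    filter_upwards [aux_slln μ X hmeas hindep ν hlaw (Q k j)] with ω hω
    have heq : (fun n : ℕ => Fn n ω (Q k j)) = fun n : ℕ =>
        (1/(n:ℝ)) * ∑ i ∈ Finset.range n, (if X i ω ≤ Q k j then (1:ℝ) else 0) :=
      funext fun n => hFn n ω _
    rw [heq, hF]
    exact hω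
  filter_upwards [haegrid] with ω hω
  -- sup convergence of the empirical CDF (Glivenko–Cantelli)
  have hD : Tendsto (fun n => ⨆ y : ℝ, |Fn n ω y - F y|) atTop (𝓝 0) := by
    rw [Metric.tendsto_atTop]
    intro ε hε
    obtain ⟨k, hk⟩ := exists_nat_gt (2/ε)
    have h2ε : (0:ℝ) < 2/ε := by positivity
    have hkpos : (0:ℝ) < k := lt_trans h2ε hk
    have hk1 : 1 ≤ k := by exact_mod_cast Nat.one_le_iff_ne_zero.mpr (by
      intro h; rw [h] at hkpos; norm_num at hkpos)
    have hinv : 1/(k:ℝ) < ε/2 := by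
      rw [div_lt_div_iff₀ hkpos (by norm_num : (0:ℝ) < 2)]
      rw [div_lt_iff₀ hε] at hk
      nlinarith
    have hδpos : (0:ℝ) < ε/4 := by positivity
    have hev : ∀ᶠ n in atTop, ∀ j ∈ Finset.range k,
        |Fn n ω (Q k j) - F (Q k j)| ≤ ε/4 := by
      rw [eventually_all_finset]
      intro j _
      have h := hω k j
      have h2 : ∀ᶠ n in atTop, Fn n ω (Q k j) ∈ Metric.ball (F (Q k j)) (ε/4) :=
        h (Metric.ball_mem_nhds _ hδpos)
      filter_upwards [h2] with n hn
      rw [Metric.mem_ball, Real.dist_eq] at hn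
      exact hn.le
    obtain ⟨N, hN⟩ := eventually_atTop.mp hev
    refine ⟨N, fun n hn => ?_⟩
    have hsup : (⨆ y : ℝ, |Fn n ω y - F y|) ≤ 1/(k:ℝ) + ε/4 := by
      refine ciSup_le fun y => ?_
      refine aux_gc_det hFmono hF0 hF1 (hFnmono n ω) (hFn0 n ω) (hFn1 n ω) hk1 (Q k)
        (fun j hj1 hjk => (hQ k j hj1 hjk).1)
        (fun j hj1 hjk => (hQ k j hj1 hjk).2.1)
        (fun j hj1 hjk => (hQ k j hj1 hjk).2.2)
        hδpos.le
        (fun j hj1 hjk => hN n hn j (Finset.mem_range.mpr hjk)) y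
    rw [Real.dist_eq, sub_zero,
      abs_of_nonneg (le_trans (abs_nonneg _) (hle n ω 0))]
    have : 1/(k:ℝ) + ε/4 < ε := by linarith
    exact lt_of_le_of_lt hsup this
  -- squeeze
  refine tendsto_of_tendsto_of_tendsto_of_le_of_le'
    (h := fun n : ℕ => 2 * ⨆ y : ℝ, |Fn n ω y - F y|) tendsto_const_nhds ?_ ?_ ?_
  · have := hD.const_mul (2:ℝ)
    simpa using this
  · filter_upwards [eventually_ge_atTop 1] with n hn
    have hb : BddAbove (Set.range fun x => |Fnθ n ω x - Fθ x|) := by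
      refine ⟨2 * ⨆ y : ℝ, |Fn n ω y - F y|, fun z hz => ?_⟩
      obtain ⟨x, rfl⟩ := hz
      exact part1 n hn ω x
    exact le_trans (abs_nonneg _) (le_ciSup hb 0)
  · filter_upwards [eventually_ge_atTop 1] with n hn
    exact ciSup_le fun x => part1 n hn ω x
end
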